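/- arXiv:2403.03275 — 7 statements merged into one kernel-verified Lean document; each statement's English description precedes it below -/
import Mathlib

section
/- Let a,b>0 and suppose (p_N)_{N≥1} with p_N:{0,1}^N→ℝ satisfies the basic weight equations: p_1(0)=1+a, p_1(1)=1+b; for N≥2, p_N(0,τ_2,…,τ_N)=(1+a)·p_{N−1}(τ_2,…,τ_N) for all (τ_2,…,τ_N)∈{0,1}^{N−1}; p_N(τ_1,…,τ_{N−1},1)=(1+b)·p_{N−1}(τ_1,…,τ_{N−1}) for all (τ_1,…,τ_{N−1})∈{0,1}^{N−1}; and for every 1≤n≤N−1, p_N(τ_1,…,τ_{n−1},1,0,τ_{n+2},…,τ_N)=p_{N−1}(τ_1,…,τ_{n−1},1,τ_{n+2},…,τ_N)+p_{N−1}(τ_1,…,τ_{n−1},0,τ_{n+2},…,τ_N). Then p_N(τ)=f_N(τ) for every N≥1 and every τ∈{0,1}^N. -/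
open Finset

/-- Partial sum `s^τ(k) = τ_1 + ⋯ + τ_k` of a word `τ ∈ {0,1}^N`. -/
def pSum {N : ℕ} (τ : Fin N → Fin 2) (k : ℕ) : ℤ :=
  ∑ i : Fin N, if (i : ℕ) < k then ((τ i : ℕ) : ℤ) else 0

/-- `min_{0 ≤ j ≤ N} (s^τ(j) − s^ξ(j))`. -/
def minDiff {N : ℕ} (τ ξ : Fin N → Fin 2) : ℤ :=
  (Finset.range (N + 1)).inf' (by simp) fun j => pSum τ j - pSum ξ j

/-- `f_N(τ) = Σ_ξ b^(s^τ(N)−s^ξ(N)) (ab)^(−min_{0≤j≤N}(s^τ(j)−s^ξ(j)))`. -/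
noncomputable def fTL (a b : ℝ) {N : ℕ} (τ : Fin N → Fin 2) : ℝ :=
  ∑ ξ : Fin N → Fin 2, b ^ (pSum τ N - pSum ξ N) * (a * b) ^ (-(minDiff τ ξ))

lemma pSum_zero {N : ℕ} (τ : Fin N → Fin 2) : pSum τ 0 = 0 := by simp [pSum]

lemma pSum_of_le {N : ℕ} (τ : Fin N → Fin 2) {k : ℕ} (h : N ≤ k) : pSum τ k = pSum τ N := by
  unfold pSum
  refine Finset.sum_congr rfl fun i _ => ?_
  have := i.2
  rw [if_pos (by omega), if_pos (by omega)]

lemma pSum_cons {N : ℕ} (x : Fin 2) (τ : Fin N → Fin 2) (j : ℕ) :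
    pSum (Fin.cons x τ) (j + 1) = (x : ℤ) + pSum τ j := by
  unfold pSum
  rw [Fin.sum_univ_succ]
  simp only [Fin.cons_zero, Fin.cons_succ, Fin.val_zero, Fin.val_succ]
  rw [if_pos (by omega)]
  congr 1
  refine Finset.sum_congr rfl fun i _ => ?_
  by_cases h : (i : ℕ) < j
  · rw [if_pos (by omega), if_pos h]
  · rw [if_neg (by omega), if_neg h]

lemma pSum_snoc {N : ℕ} (τ : Fin N → Fin 2) (x : Fin 2) {j : ℕ} (h : j ≤ N) :
    pSum (Fin.snoc τ x) j = pSum τ j := by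
  unfold pSum
  rw [Fin.sum_univ_castSucc]
  simp only [Fin.snoc_castSucc, Fin.snoc_last, Fin.coe_castSucc, Fin.val_last]
  rw [if_neg (by omega), add_zero]

lemma pSum_snoc_top {N : ℕ} (τ : Fin N → Fin 2) (x : Fin 2) :
    pSum (Fin.snoc τ x) (N + 1) = pSum τ N + (x : ℤ) := by
  unfold pSum
  rw [Fin.sum_univ_castSucc]
  simp only [Fin.snoc_castSucc, Fin.snoc_last, Fin.coe_castSucc, Fin.val_last]
  rw [if_pos (by omega)]
  congr 1
  refine Finset.sum_congr rfl fun i _ => ?_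
  have := i.2
  rw [if_pos (by omega), if_pos (by omega)]

lemma pSum_append_le {k m : ℕ} (σ : Fin k → Fin 2) (ρ : Fin m → Fin 2) {j : ℕ} (h : j ≤ k) :
    pSum (Fin.append σ ρ) j = pSum σ j := by
  unfold pSum
  rw [Fin.sum_univ_add]
  simp only [Fin.append_left, Fin.append_right, Fin.coe_castAdd, Fin.coe_natAdd]
  have h2 : (∑ i : Fin m, if k + (i:ℕ) < j then ((ρ i : ℕ) : ℤ) else 0) = 0 :=
    Finset.sum_eq_zero fun i _ => by rw [if_neg (by omega)]
  rw [h2, add_zero]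

lemma pSum_append_add {k m : ℕ} (σ : Fin k → Fin 2) (ρ : Fin m → Fin 2) (t : ℕ) :
    pSum (Fin.append σ ρ) (k + t) = pSum σ k + pSum ρ t := by
  unfold pSum
  rw [Fin.sum_univ_add]
  simp only [Fin.append_left, Fin.append_right, Fin.coe_castAdd, Fin.coe_natAdd]
  congr 1
  · refine Finset.sum_congr rfl fun i _ => ?_
    have := i.2
    rw [if_pos (by omega), if_pos (by omega)]
  · refine Finset.sum_congr rfl fun i _ => ?_
    by_cases h : (i : ℕ) < t
    · rw [if_pos (by omega), if_pos h]
    · rw [if_neg (by omega), if_neg h]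

lemma inf'_const_add {s : Finset ℕ} (h : s.Nonempty) (f : ℕ → ℤ) (c : ℤ) :
    s.inf' h (fun j => c + f j) = c + s.inf' h f := by
  apply le_antisymm
  · obtain ⟨j, hj, hje⟩ := Finset.exists_mem_eq_inf' h f
    rw [hje]
    exact Finset.inf'_le _ hj
  · refine Finset.le_inf' _ _ fun j hj => ?_
    exact (add_le_add_iff_left c).mpr (Finset.inf'_le _ hj)

lemma minDiff_nonpos {N : ℕ} (τ ξ : Fin N → Fin 2) : minDiff τ ξ ≤ 0 := by
  have h : minDiff τ ξ ≤ pSum τ 0 - pSum ξ 0 :=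
    Finset.inf'_le _ (Finset.mem_range.mpr (by omega))
  simpa [pSum_zero] using h

lemma minDiff_le_top {N : ℕ} (τ ξ : Fin N → Fin 2) : minDiff τ ξ ≤ pSum τ N - pSum ξ N :=
  Finset.inf'_le _ (Finset.mem_range.mpr (by omega))

lemma range_succ_image (n : ℕ) :
    Finset.range (n + 1) = insert 0 ((Finset.range n).image Nat.succ) := by
  ext j
  simp only [Finset.mem_range, Finset.mem_insert, Finset.mem_image]
  constructor
  · intro h; rcases j with _|j
    · exact Or.inl rfl
    · exact Or.inr ⟨j, by omega, rfl⟩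
  · rintro (rfl | ⟨i, hi, rfl⟩) <;> omega

lemma minDiff_cons {N : ℕ} (x z : Fin 2) (τ ξ : Fin N → Fin 2) :
    minDiff (Fin.cons x τ) (Fin.cons z ξ) = min 0 ((x : ℤ) - (z : ℤ) + minDiff τ ξ) := by
  unfold minDiff
  rw [Finset.inf'_congr (by simp) (range_succ_image (N+1)) (fun _ _ => rfl),
    Finset.inf'_insert (H := by simp), Finset.inf'_image]
  simp only [pSum_zero, sub_self, Function.comp]
  have : ∀ j, pSum (Fin.cons x τ) (Nat.succ j) - pSum (Fin.cons z ξ) (Nat.succ j)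
      = ((x : ℤ) - (z : ℤ)) + (pSum τ j - pSum ξ j) := by
    intro j; rw [Nat.succ_eq_add_one, pSum_cons, pSum_cons]; ring
  rw [Finset.inf'_congr (by simp) rfl (fun j _ => this j), inf'_const_add]

lemma minDiff_snoc {N : ℕ} (τ ξ : Fin N → Fin 2) (x z : Fin 2) :
    minDiff (Fin.snoc τ x) (Fin.snoc ξ z) =
      min (minDiff τ ξ) (pSum τ N - pSum ξ N + (x : ℤ) - (z : ℤ)) := by
  unfold minDiff
  rw [Finset.inf'_congr (by simp) (Finset.range_add_one (n := N+1)) (fun _ _ => rfl),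
    Finset.inf'_insert (H := by simp)]
  have h1 : ∀ j ∈ Finset.range (N + 1),
      pSum (Fin.snoc τ x) j - pSum (Fin.snoc ξ z) j = pSum τ j - pSum ξ j := by
    intro j hj
    rw [pSum_snoc _ _ (by simpa [Nat.lt_succ_iff] using hj),
      pSum_snoc _ _ (by simpa [Nat.lt_succ_iff] using hj)]
  rw [Finset.inf'_congr (by simp) rfl h1, pSum_snoc_top, pSum_snoc_top]
  rw [min_comm]
  congr 1
  ring

lemma range_add_union (k m : ℕ) :
    Finset.range (k + m + 1) =
      Finset.range (k + 1) ∪ (Finset.range (m + 1)).image (k + ·) := by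
  ext j
  simp only [Finset.mem_range, Finset.mem_union, Finset.mem_image]
  constructor
  · intro h
    by_cases hj : j < k + 1
    · exact Or.inl hj
    · exact Or.inr ⟨j - k, by omega, by omega⟩
  · rintro (h | ⟨i, hi, rfl⟩) <;> omega

lemma minDiff_append {k m : ℕ} (σ σ' : Fin k → Fin 2) (ρ ρ' : Fin m → Fin 2) :
    minDiff (Fin.append σ ρ) (Fin.append σ' ρ') =
      min (minDiff σ σ') (pSum σ k - pSum σ' k + minDiff ρ ρ') := by
  unfold minDiff
  rw [Finset.inf'_congr (by simp) (range_add_union k m) (fun _ _ => rfl),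
    Finset.inf'_union (by simp) (by simp)]
  congr 1
  · refine Finset.inf'_congr (by simp) rfl fun j hj => ?_
    have hj' : j ≤ k := by simpa [Nat.lt_succ_iff] using hj
    rw [pSum_append_le _ _ hj', pSum_append_le _ _ hj']
  · rw [Finset.inf'_image]
    have : ∀ t ∈ Finset.range (m + 1),
        ((fun j => pSum (Fin.append σ ρ) j - pSum (Fin.append σ' ρ') j) ∘ (k + ·)) t
          = (pSum σ k - pSum σ' k) + (pSum ρ t - pSum ρ' t) := by
      intro t _
      simp only [Function.comp]
      rw [pSum_append_add, pSum_append_add]; ring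
    rw [Finset.inf'_congr (by simp) rfl this, inf'_const_add]

def appendEquiv (k m : ℕ) : ((Fin k → Fin 2) × (Fin m → Fin 2)) ≃ (Fin (k + m) → Fin 2) where
  toFun p := Fin.append p.1 p.2
  invFun f := (fun i => f (Fin.castAdd m i), fun i => f (Fin.natAdd k i))
  left_inv p := by
    ext i <;> simp [Fin.append_left, Fin.append_right]
  right_inv f := Fin.append_castAdd_natAdd

lemma sum_cons_eq (N : ℕ) (F : (Fin (N + 1) → Fin 2) → ℝ) :
    ∑ ξ, F ξ = ∑ ξ : Fin N → Fin 2, (F (Fin.cons 0 ξ) + F (Fin.cons 1 ξ)) := by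
  rw [← Fintype.sum_equiv (Fin.consEquiv (fun _ : Fin (N+1) => Fin 2))
      (fun p => F (Fin.cons p.1 p.2)) F (fun p => rfl)]
  rw [Fintype.sum_prod_type, Fin.sum_univ_two, ← Finset.sum_add_distrib]

lemma sum_snoc_eq (N : ℕ) (F : (Fin (N + 1) → Fin 2) → ℝ) :
    ∑ ξ, F ξ = ∑ ξ : Fin N → Fin 2, (F (Fin.snoc ξ 0) + F (Fin.snoc ξ 1)) := by
  rw [← Fintype.sum_equiv (Fin.snocEquiv (fun _ : Fin (N+1) => Fin 2))
      (fun p => F (Fin.snoc p.2 p.1)) F (fun p => rfl)]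
  rw [Fintype.sum_prod_type_right]
  simp only [Fin.sum_univ_two]

lemma sum_append_eq (k m : ℕ) (F : (Fin (k + m) → Fin 2) → ℝ) :
    ∑ ξ, F ξ = ∑ σ : Fin k → Fin 2, ∑ ρ : Fin m → Fin 2, F (Fin.append σ ρ) := by
  rw [← Fintype.sum_equiv (appendEquiv k m)
      (fun p => F (Fin.append p.1 p.2)) F (fun p => rfl)]
  rw [Fintype.sum_prod_type]

lemma sum_two_arrow (G : (Fin 2 → Fin 2) → ℝ) :
    ∑ w, G w = G ![0, 0] + G ![0, 1] + G ![1, 0] + G ![1, 1] := by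
  rw [← Fintype.sum_equiv (finTwoArrowEquiv (Fin 2)).symm
      (fun p => G ![p.1, p.2]) G (fun p => rfl)]
  rw [Fintype.sum_prod_type, Fin.sum_univ_two, Fin.sum_univ_two, Fin.sum_univ_two]
  ring

lemma sum_one_arrow (G : (Fin 1 → Fin 2) → ℝ) :
    ∑ w, G w = G ![0] + G ![1] := by
  have h : ∀ z : Fin 2, ((Equiv.funUnique (Fin 1) (Fin 2)).symm z) = ![z] := by
    intro z; funext i; fin_cases i; rfl
  rw [← Fintype.sum_equiv (Equiv.funUnique (Fin 1) (Fin 2)).symm (fun z => G ![z]) G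
      (fun z => by rw [h]), Fin.sum_univ_two]

section fTLlemmas
variable {a b : ℝ}

lemma key_shift (ha : 0 < a) (hb : 0 < b) (d M : ℤ) :
    b ^ (d - 1) * (a * b) ^ (-(M - 1)) = a * (b ^ d * (a * b) ^ (-M)) := by
  have hb' : b ≠ 0 := hb.ne'
  have hab : a * b ≠ 0 := by positivity
  rw [zpow_sub₀ hb', (by ring : -(M - 1) = -M + 1), zpow_add₀ hab, zpow_one, zpow_one]
  field_simp

lemma fTL_nil_zero (ha : 0 < a) (hb : 0 < b) : fTL a b ![(0 : Fin 2)] = 1 + a := by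
  rw [fTL, sum_one_arrow]
  have h1 : pSum ![(0 : Fin 2)] 1 = 0 := by decide
  have h2 : pSum ![(1 : Fin 2)] 1 = 1 := by decide
  have h3 : minDiff ![(0 : Fin 2)] ![(0 : Fin 2)] = 0 := by decide
  have h4 : minDiff ![(0 : Fin 2)] ![(1 : Fin 2)] = -1 := by decide
  rw [h1, h2, h3, h4]
  have hb' : b ≠ 0 := hb.ne'
  norm_num
  field_simp

lemma fTL_nil_one (ha : 0 < a) (hb : 0 < b) : fTL a b ![(1 : Fin 2)] = 1 + b := by
  rw [fTL, sum_one_arrow]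
  have h1 : pSum ![(0 : Fin 2)] 1 = 0 := by decide
  have h2 : pSum ![(1 : Fin 2)] 1 = 1 := by decide
  have h3 : minDiff ![(1 : Fin 2)] ![(0 : Fin 2)] = 0 := by decide
  have h4 : minDiff ![(1 : Fin 2)] ![(1 : Fin 2)] = 0 := by decide
  rw [h1, h2, h3, h4]
  norm_num
  ring

lemma fTL_cons_zero (ha : 0 < a) (hb : 0 < b) {N : ℕ} (τ : Fin N → Fin 2) :
    fTL a b (Fin.cons 0 τ) = (1 + a) * fTL a b τ := by
  rw [fTL, sum_cons_eq, fTL, Finset.mul_sum]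
  refine Finset.sum_congr rfl fun ξ _ => ?_
  have hM := minDiff_nonpos τ ξ
  have hm0 : minDiff (Fin.cons (0 : Fin 2) τ) (Fin.cons 0 ξ) = minDiff τ ξ := by
    rw [minDiff_cons]
    simp only [Fin.val_zero, Nat.cast_zero, sub_self, zero_add]
    omega
  have hm1 : minDiff (Fin.cons (0 : Fin 2) τ) (Fin.cons 1 ξ) = minDiff τ ξ - 1 := by
    rw [minDiff_cons]
    simp only [Fin.val_zero, Fin.val_one, Nat.cast_zero, Nat.cast_one]
    omega
  rw [hm0, hm1, pSum_cons, pSum_cons, pSum_cons]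
  simp only [Fin.val_zero, Fin.val_one, Nat.cast_zero, Nat.cast_one, zero_add]
  rw [(by ring : pSum τ N - (1 + pSum ξ N) = (pSum τ N - pSum ξ N) - 1), key_shift ha hb]
  ring

lemma fTL_snoc_one (ha : 0 < a) (hb : 0 < b) {N : ℕ} (τ : Fin N → Fin 2) :
    fTL a b (Fin.snoc τ 1) = (1 + b) * fTL a b τ := by
  rw [fTL, sum_snoc_eq, fTL, Finset.mul_sum]
  refine Finset.sum_congr rfl fun ξ _ => ?_
  have hM := minDiff_le_top τ ξ
  have hm0 : minDiff (Fin.snoc τ (1 : Fin 2)) (Fin.snoc ξ 0) = minDiff τ ξ := by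
    rw [minDiff_snoc]
    simp only [Fin.val_zero, Fin.val_one, Nat.cast_zero, Nat.cast_one]
    omega
  have hm1 : minDiff (Fin.snoc τ (1 : Fin 2)) (Fin.snoc ξ 1) = minDiff τ ξ := by
    rw [minDiff_snoc]
    simp only [Fin.val_one, Nat.cast_one]
    omega
  rw [hm0, hm1, pSum_snoc_top, pSum_snoc_top, pSum_snoc_top]
  simp only [Fin.val_zero, Fin.val_one, Nat.cast_zero, Nat.cast_one, add_zero]
  rw [(by ring : pSum τ N + 1 - pSum ξ N = (pSum τ N - pSum ξ N) + 1),
    (by ring : pSum τ N + 1 - (pSum ξ N + 1) = pSum τ N - pSum ξ N),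
    zpow_add₀ hb.ne', zpow_one]
  ring

end fTLlemmas

section bulk
variable {a b : ℝ}

lemma bulk_term (ha : 0 < a) (hb : 0 < b) {k m : ℕ}
    (α β : Fin k → Fin 2) (γ δ : Fin m → Fin 2)
    (w w' : Fin 2 → Fin 2) (v v' : Fin 1 → Fin 2)
    (h1 : pSum w 2 - pSum w' 2 = pSum v 1 - pSum v' 1)
    (h2 : minDiff w w' = minDiff v v') :
    b ^ (pSum (Fin.append (Fin.append α w) γ) (k + 2 + m)
        - pSum (Fin.append (Fin.append β w') δ) (k + 2 + m))
      * (a * b) ^ (-(minDiff (Fin.append (Fin.append α w) γ) (Fin.append (Fin.append β w') δ)))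
    = b ^ (pSum (Fin.append (Fin.append α v) γ) (k + 1 + m)
        - pSum (Fin.append (Fin.append β v') δ) (k + 1 + m))
      * (a * b) ^ (-(minDiff (Fin.append (Fin.append α v) γ) (Fin.append (Fin.append β v') δ))) := by
  simp only [pSum_append_add, minDiff_append]
  rw [h2]
  have e1 : pSum α k + pSum w 2 + pSum γ m - (pSum β k + pSum w' 2 + pSum δ m)
      = pSum α k + pSum v 1 + pSum γ m - (pSum β k + pSum v' 1 + pSum δ m) := by omega
  have e2 : pSum α k + pSum w 2 - (pSum β k + pSum w' 2)
      = pSum α k + pSum v 1 - (pSum β k + pSum v' 1) := by omega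
  rw [e1, e2]

end bulk

lemma fTL_bulk {a b : ℝ} (ha : 0 < a) (hb : 0 < b) {k m : ℕ}
    (α : Fin k → Fin 2) (γ : Fin m → Fin 2) :
    fTL a b (Fin.append (Fin.append α ![1, 0]) γ)
      = fTL a b (Fin.append (Fin.append α ![1]) γ)
        + fTL a b (Fin.append (Fin.append α ![0]) γ) := by
  rw [fTL, fTL, fTL,
    sum_append_eq (k + 2) m, sum_append_eq k 2,
    sum_append_eq (k + 1) m, sum_append_eq (k + 1) m, sum_append_eq k 1, sum_append_eq k 1]
  simp only [sum_two_arrow, sum_one_arrow]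
  rw [← Finset.sum_add_distrib]
  refine Finset.sum_congr rfl fun β _ => ?_
  rw [← Finset.sum_add_distrib, ← Finset.sum_add_distrib, ← Finset.sum_add_distrib,
    ← Finset.sum_add_distrib, ← Finset.sum_add_distrib, ← Finset.sum_add_distrib]
  refine Finset.sum_congr rfl fun δ _ => ?_
  rw [bulk_term ha hb α β γ δ ![1,0] ![0,0] ![1] ![0] (by decide) (by decide),
    bulk_term ha hb α β γ δ ![1,0] ![0,1] ![1] ![1] (by decide) (by decide),
    bulk_term ha hb α β γ δ ![1,0] ![1,0] ![0] ![0] (by decide) (by decide),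
    bulk_term ha hb α β γ δ ![1,0] ![1,1] ![0] ![1] (by decide) (by decide)]
  ring

lemma cast_eq_fam (q : (N : ℕ) → (Fin N → Fin 2) → ℝ) {N M : ℕ} (h : N = M)
    (τ : Fin N → Fin 2) : q M (fun i => τ (Fin.cast h.symm i)) = q N τ := by
  subst h; rfl

lemma fin_two_cases (x : Fin 2) : x = 0 ∨ x = 1 := by
  fin_cases x
  · exact Or.inl rfl
  · exact Or.inr rfl

lemma exists_descent {M : ℕ} (τ : Fin (M + 1) → Fin 2)
    (h0 : τ 0 = 1) (hl : τ (Fin.last M) = 0) :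
    ∃ k m, ∃ h : M + 1 = k + 2 + m,
      τ ⟨k, by omega⟩ = 1 ∧ τ ⟨k + 1, by omega⟩ = 0 := by
  classical
  have hPex : ∃ j, ∃ h : j < M + 1, τ ⟨j, h⟩ = 0 := ⟨M, by omega, hl⟩
  obtain ⟨hjlt, hj0⟩ := Nat.find_spec hPex
  have hjM : Nat.find hPex ≤ M := Nat.find_le ⟨by omega, hl⟩
  have hj1 : 1 ≤ Nat.find hPex := by
    by_contra h
    have hfind0 : Nat.find hPex = 0 := by omega
    have hz : (⟨Nat.find hPex, hjlt⟩ : Fin (M + 1)) = 0 := Fin.ext (by simp only [Fin.val_zero]; exact hfind0)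
    rw [hz, h0] at hj0
    exact absurd hj0 (by decide)
  refine ⟨Nat.find hPex - 1, M - Nat.find hPex, by omega, ?_, ?_⟩
  · have hnk : ¬ ∃ h : Nat.find hPex - 1 < M + 1, τ ⟨Nat.find hPex - 1, h⟩ = 0 :=
      Nat.find_min hPex (by omega)
    push_neg at hnk
    exact (fin_two_cases _).resolve_left (hnk (by omega))
  · have he : (⟨Nat.find hPex - 1 + 1, by omega⟩ : Fin (M + 1)) = ⟨Nat.find hPex, hjlt⟩ :=
      Fin.ext (by show Nat.find hPex - 1 + 1 = Nat.find hPex; omega)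
    rw [he]; exact hj0

theorem stmt0 (a b : ℝ) (ha : 0 < a) (hb : 0 < b)
    (p : (N : ℕ) → (Fin N → Fin 2) → ℝ)
    (hinit0 : p 1 ![0] = 1 + a)
    (hinit1 : p 1 ![1] = 1 + b)
    (hleft : ∀ (N : ℕ), 1 ≤ N → ∀ τ : Fin N → Fin 2,
      p (N + 1) (Fin.cons 0 τ) = (1 + a) * p N τ)
    (hright : ∀ (N : ℕ), 1 ≤ N → ∀ τ : Fin N → Fin 2,
      p (N + 1) (Fin.snoc τ 1) = (1 + b) * p N τ)
    (hbulk : ∀ (k m : ℕ) (α : Fin k → Fin 2) (γ : Fin m → Fin 2),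
      p (k + 2 + m) (Fin.append (Fin.append α ![1, 0]) γ)
        = p (k + 1 + m) (Fin.append (Fin.append α ![1]) γ)
          + p (k + 1 + m) (Fin.append (Fin.append α ![0]) γ)) :
    ∀ (N : ℕ), 1 ≤ N → ∀ τ : Fin N → Fin 2, p N τ = fTL a b τ := by
  intro N
  induction N using Nat.strong_induction_on with
  | _ N IH =>
  intro hN τ
  obtain ⟨M, rfl⟩ : ∃ M, N = M + 1 := ⟨N - 1, by omega⟩
  rcases Nat.eq_zero_or_pos M with hM | hM
  · subst hM
    have hτ : τ = ![τ 0] := by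
      funext i
      have hi : i = 0 := Fin.ext (by omega)
      subst hi
      simp
    rcases fin_two_cases (τ 0) with h | h
    · rw [hτ, h, hinit0, fTL_nil_zero ha hb]
    · rw [hτ, h, hinit1, fTL_nil_one ha hb]
  · by_cases h0 : τ 0 = 0
    · have hτ : τ = Fin.cons 0 (Fin.tail τ) := by
        rw [← h0]; exact (Fin.cons_self_tail τ).symm
      rw [hτ, hleft M hM, fTL_cons_zero ha hb, IH M (by omega) hM]
    · by_cases hlast : τ (Fin.last M) = 1
      · have hτ : τ = Fin.snoc (Fin.init τ) 1 := by
          rw [← hlast]; exact (Fin.snoc_init_self τ).symm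
        rw [hτ, hright M hM, fTL_snoc_one ha hb, IH M (by omega) hM]
      · have h0' : τ 0 = 1 := (fin_two_cases (τ 0)).resolve_left h0
        have hlast' : τ (Fin.last M) = 0 := (fin_two_cases _).resolve_right hlast
        obtain ⟨k, m, heq, hk1, hk0⟩ := exists_descent τ h0' hlast'
        set τ' : Fin (k + 2 + m) → Fin 2 := fun i => τ (Fin.cast heq.symm i) with hτ'
        set A : Fin k → Fin 2 := fun i => τ' (Fin.castAdd m (Fin.castAdd 2 i)) with hA
        set W : Fin 2 → Fin 2 := fun i => τ' (Fin.castAdd m (Fin.natAdd k i)) with hW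
        set G : Fin m → Fin 2 := fun i => τ' (Fin.natAdd (k + 2) i) with hG
        have hdec : τ' = Fin.append (Fin.append A W) G := by
          have h1 : τ' = Fin.append (fun i => τ' (Fin.castAdd m i))
              (fun i => τ' (Fin.natAdd (k + 2) i)) := Fin.append_castAdd_natAdd.symm
          have h2 : (fun i : Fin (k + 2) => τ' (Fin.castAdd m i)) = Fin.append A W :=
            Fin.append_castAdd_natAdd.symm
          rw [h1, h2]
        have hWval : W = ![1, 0] := by
          funext i
          fin_cases i
          · show τ (Fin.cast heq.symm (Fin.castAdd m (Fin.natAdd k 0))) = 1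
            rw [show Fin.cast heq.symm (Fin.castAdd m (Fin.natAdd k 0)) =
              (⟨k, by omega⟩ : Fin (M + 1)) from Fin.ext (by simp)]
            exact hk1
          · show τ (Fin.cast heq.symm (Fin.castAdd m (Fin.natAdd k 1))) = 0
            rw [show Fin.cast heq.symm (Fin.castAdd m (Fin.natAdd k 1)) =
              (⟨k + 1, by omega⟩ : Fin (M + 1)) from Fin.ext (by simp)]
            exact hk0
        rw [hWval] at hdec
        calc p (M + 1) τ = p (k + 2 + m) τ' := (cast_eq_fam p heq τ).symm
          _ = p (k + 2 + m) (Fin.append (Fin.append A ![1, 0]) G) := by rw [hdec]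
          _ = p (k + 1 + m) (Fin.append (Fin.append A ![1]) G)
              + p (k + 1 + m) (Fin.append (Fin.append A ![0]) G) := hbulk k m A G
          _ = fTL a b (Fin.append (Fin.append A ![1]) G)
              + fTL a b (Fin.append (Fin.append A ![0]) G) := by
                rw [IH (k + 1 + m) (by omega) (by omega), IH (k + 1 + m) (by omega) (by omega)]
          _ = fTL a b (Fin.append (Fin.append A ![1, 0]) G) := (fTL_bulk ha hb A G).symm
          _ = fTL a b τ' := by rw [hdec]
          _ = fTL a b τ := cast_eq_fam (fun N τ => fTL a b τ) heq τ
end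

section
/- Let φ,ψ:[0,1]→ℝ be continuous functions and let A={x∈[0,1] : φ(x)=min_{[0,1]}φ}. Then lim_{τ→0⁺} ( min_{x∈[0,1]}(φ(x)−τ·ψ(x)) − min_{x∈[0,1]}φ(x) ) / τ = − max_{x∈A} ψ(x); equivalently, min_{[0,1]}(φ−τψ) = min_{[0,1]}φ − τ·max_A ψ + o(τ) as τ→0⁺. -/
/-- Right-derivative of the minimum: if `φ, ψ` are continuous on `[0,1]` and
`A = {x ∈ [0,1] : φ(x) = min φ}`, then
`(min_{[0,1]}(φ − τψ) − min_{[0,1]} φ)/τ → −max_A ψ` as `τ → 0⁺`. -/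
theorem stmt7 (φ ψ : ℝ → ℝ) (hφ : ContinuousOn φ (Set.Icc 0 1))
    (hψ : ContinuousOn ψ (Set.Icc 0 1)) :
    Filter.Tendsto
      (fun τ : ℝ =>
        (sInf ((fun x => φ x - τ * ψ x) '' Set.Icc 0 1) - sInf (φ '' Set.Icc 0 1)) / τ)
      (nhdsWithin 0 (Set.Ioi 0))
      (nhds (-sSup (ψ '' {x ∈ Set.Icc (0:ℝ) 1 | φ x = sInf (φ '' Set.Icc 0 1)}))) := by
  set K : Set ℝ := Set.Icc 0 1 with hKdef
  have hK : IsCompact K := isCompact_Icc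
  have hKc : IsClosed K := isClosed_Icc
  have hKne : K.Nonempty := ⟨0, by constructor <;> norm_num⟩
  have minatt : ∀ g : ℝ → ℝ, ContinuousOn g K →
      ∃ x ∈ K, (∀ y ∈ K, g x ≤ g y) ∧ sInf (g '' K) = g x := by
    intro g hg
    obtain ⟨x, hxK, hx⟩ := hK.exists_isMinOn hKne hg
    have hmin : ∀ y ∈ K, g x ≤ g y := fun y hy => hx hy
    refine ⟨x, hxK, hmin, IsLeast.csInf_eq ⟨⟨x, hxK, rfl⟩, ?_⟩⟩
    rintro _ ⟨y, hy, rfl⟩; exact hmin y hy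
  obtain ⟨x₀, hx₀K, hx₀min, hminf⟩ := minatt φ hφ
  set m : ℝ := sInf (φ '' K) with hm
  set A : Set ℝ := {x ∈ K | φ x = m} with hA
  have hAsub : A ⊆ K := fun x hx => hx.1
  have hAclosed : IsClosed A := by
    have : A = K ∩ φ ⁻¹' {m} := by ext x; simp [hA, Set.mem_sep_iff]
    rw [this]
    exact hφ.preimage_isClosed_of_isClosed hKc isClosed_singleton
  have hAcomp : IsCompact A := hK.of_isClosed_subset hAclosed hAsub
  have hAne : A.Nonempty := ⟨x₀, hx₀K, hminf.symm⟩
  obtain ⟨y₀, hy₀A, hy₀max⟩ := hAcomp.exists_isMaxOn hAne (hψ.mono hAsub)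
  set M : ℝ := sSup (ψ '' A) with hM
  have hsup : M = ψ y₀ := by
    rw [hM]
    refine IsGreatest.csSup_eq ⟨⟨y₀, hy₀A, rfl⟩, ?_⟩
    rintro _ ⟨y, hy, rfl⟩; exact hy₀max hy
  have hψle : ∀ x ∈ A, ψ x ≤ M := by
    intro x hx; rw [hsup]; exact hy₀max hx
  obtain ⟨z₀, hz₀K, hz₀max⟩ := hK.exists_isMaxOn hKne hψ
  have hψleK : ∀ x ∈ K, ψ x ≤ ψ z₀ := fun x hx => hz₀max hx
  have hmle : ∀ x ∈ K, m ≤ φ x := by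
    intro x hx; rw [hminf]; exact hx₀min x hx
  rw [Metric.tendsto_nhdsWithin_nhds]
  intro ε hε
  set C : Set ℝ := K ∩ ψ ⁻¹' Set.Ici (M + ε/2) with hC
  have hCclosed : IsClosed C := hψ.preimage_isClosed_of_isClosed hKc isClosed_Ici
  have hCcomp : IsCompact C := hK.of_isClosed_subset hCclosed Set.inter_subset_left
  -- a δ controlling the bad set
  have key : ∃ δ > 0, ∀ x ∈ C, ∀ τ : ℝ, 0 < τ → τ < δ →
      m - τ * (M + ε/2) ≤ φ x - τ * ψ x := by
    rcases C.eq_empty_or_nonempty with hCe | hCne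
    · exact ⟨1, one_pos, fun x hx => by rw [hCe] at hx; exact absurd hx (Set.notMem_empty x)⟩
    obtain ⟨z, hzC, hzmin⟩ := hCcomp.exists_isMinOn hCne (hφ.mono Set.inter_subset_left)
    have hzK : z ∈ K := hzC.1
    have hznA : z ∉ A := by
      intro hzA
      have h1 : ψ z ≤ M := hψle z hzA
      have h2 : M + ε/2 ≤ ψ z := hzC.2
      linarith
    have hδ₁ : 0 < φ z - m := by
      rcases lt_or_eq_of_le (hmle z hzK) with h | h
      · linarith
      · exact absurd ⟨hzK, h.symm⟩ hznA
    set c : ℝ := max (ψ z₀ - (M + ε/2)) 0 with hc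
    have hc0 : 0 ≤ c := le_max_right _ _
    refine ⟨(φ z - m) / (c + 1), by positivity, ?_⟩
    intro x hx τ hτ hτδ
    have hψxc : ψ x - (M + ε/2) ≤ c := by
      have := hψleK x hx.1
      have := le_max_left (ψ z₀ - (M + ε/2)) 0
      linarith
    have h1 : τ * (ψ x - (M + ε/2)) ≤ τ * c := by
      exact mul_le_mul_of_nonneg_left hψxc hτ.le
    have h2 : τ * c ≤ (φ z - m) / (c + 1) * c := by
      exact mul_le_mul_of_nonneg_right hτδ.le hc0
    have h3 : (φ z - m) / (c + 1) * c ≤ φ z - m := by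
      rw [div_mul_eq_mul_div, div_le_iff₀ (by positivity)]
      nlinarith
    have h4 : φ z ≤ φ x := hzmin hx
    nlinarith [h1, h2, h3, h4]
  obtain ⟨δ₀, hδ₀, hkey⟩ := key
  refine ⟨δ₀, hδ₀, ?_⟩
  intro τ hτS hτd
  have hτ : 0 < τ := hτS
  have hτδ : τ < δ₀ := by
    rw [Real.dist_eq] at hτd
    have : |τ| = τ := abs_of_pos hτ
    linarith [le_abs_self (τ - 0), hτd]
  -- get the minimizer of φ - τψ
  have hgcont : ContinuousOn (fun x => φ x - τ * ψ x) K :=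
    hφ.sub (continuousOn_const.mul hψ)
  obtain ⟨w, hwK, hwmin, hwinf⟩ := minatt _ hgcont
  set f : ℝ := sInf ((fun x => φ x - τ * ψ x) '' K) with hf
  -- upper bound : f ≤ m - τ M
  have hub : f ≤ m - τ * M := by
    have : f ≤ φ y₀ - τ * ψ y₀ := by
      rw [hwinf]; exact hwmin y₀ (hAsub hy₀A)
    have hy₀m : φ y₀ = m := hy₀A.2
    rw [hsup]; linarith
  -- lower bound : m - τ(M+ε/2) ≤ f
  have hlb : m - τ * (M + ε/2) ≤ f := by
    rw [hwinf]
    by_cases hwC : w ∈ C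
    · exact hkey w hwC τ hτ hτδ
    · have hwψ : ψ w < M + ε/2 := by
        by_contra h
        exact hwC ⟨hwK, le_of_not_gt h⟩
      have := hmle w hwK
      nlinarith
  -- conclude
  have hq1 : (f - m)/τ ≤ -M := by
    rw [div_le_iff₀ hτ]; linarith
  have hq2 : -M - ε/2 ≤ (f - m)/τ := by
    rw [le_div_iff₀ hτ]; nlinarith
  rw [Real.dist_eq]
  rw [abs_lt]
  constructor <;> [linarith [hq2]; linarith [hq1]]
end

section
/- Fix a,b>0 with ab<1 (so that a/(1+a) < 1/(1+b)). Let ρ:[0,1]→[0,1] be nondecreasing and right-continuous, and let f(x)=∫_0^x ρ(t)dt. Define G_*(x)=min(max(ρ(x), a/(1+a)), 1/(1+b)) and g_*(x)=∫_0^x G_*(t)dt. Then J*(f,g_*)=J_*(f,G_*). -/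
open Finset

/-- `h(x) = x log x + (1−x) log(1−x)` (with `0·log 0 = 0`, as `Real.log 0 = 0`). -/
noncomputable def hEnt (x : ℝ) : ℝ := x * Real.log x + (1 - x) * Real.log (1 - x)

/-- `J*(f,g) = ∫₀¹ h(σ) + log(ab)·min_{[0,1]}(f−g) − log(b)·(f(1)−g(1))`, where
`g(x) = ∫₀ˣ σ(t) dt` is encoded by its density `σ`. -/
noncomputable def Jstar (a b : ℝ) (f σ : ℝ → ℝ) : ℝ :=
  (∫ x in (0:ℝ)..1, hEnt (σ x))
    + Real.log (a * b) * sInf ((fun x => f x - ∫ t in (0:ℝ)..x, σ t) '' Set.Icc 0 1)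
    - Real.log b * (f 1 - ∫ t in (0:ℝ)..1, σ t)

/-- `J_*(f,G) = ∫₀¹ [ρ log G + (1−ρ) log(1−G)]`, where `f(x) = ∫₀ˣ ρ(t) dt`. -/
noncomputable def Jlow (ρ G : ℝ → ℝ) : ℝ :=
  ∫ x in (0:ℝ)..1, (ρ x * Real.log (G x) + (1 - ρ x) * Real.log (1 - G x))

lemma clamp_sub (α β r : ℝ) (hαβ : α ≤ β) :
    r - min (max r α) β = max (r - β) 0 - max (α - r) 0 := by
  rcases le_total r α with h | h
  · rw [max_eq_right h, min_eq_left hαβ, max_eq_right (by linarith), max_eq_left (by linarith)]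
    ring
  · rw [max_eq_left h]
    rcases le_total r β with h2 | h2
    · rw [min_eq_left h2, max_eq_right (by linarith), max_eq_right (by linarith)]; ring
    · rw [min_eq_right h2, max_eq_left (by linarith), max_eq_right (by linarith)]; ring

lemma clamp_hEnt (α β r : ℝ) (hαβ : α ≤ β) :
    hEnt (min (max r α) β)
      = (r * Real.log (min (max r α) β) + (1 - r) * Real.log (1 - min (max r α) β))
        + max (α - r) 0 * (Real.log α - Real.log (1 - α))
        + max (r - β) 0 * (Real.log (1 - β) - Real.log β) := by
  unfold hEnt
  rcases le_total r α with h | h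
  · rw [max_eq_right h, min_eq_left hαβ, max_eq_left (by linarith), max_eq_right (by linarith)]
    ring
  · rw [max_eq_left h]
    rcases le_total r β with h2 | h2
    · rw [min_eq_left h2, max_eq_right (by linarith), max_eq_right (by linarith)]; ring
    · rw [min_eq_right h2, max_eq_right (by linarith), max_eq_left (by linarith)]; ring

lemma log_ratio (c : ℝ) (hc : 0 < c) :
    Real.log (c / (1 + c)) - Real.log (1 / (1 + c)) = Real.log c := by
  rw [Real.log_div (ne_of_gt hc) (by positivity), Real.log_div one_ne_zero (by positivity),
    Real.log_one]
  ring


open MeasureTheory intervalIntegral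

theorem stmt8 (a b : ℝ) (ha : 0 < a) (hb : 0 < b) (hab : a * b < 1)
    (ρ : ℝ → ℝ) (hmono : MonotoneOn ρ (Set.Icc 0 1))
    (hrange : ∀ x ∈ Set.Icc (0:ℝ) 1, ρ x ∈ Set.Icc (0:ℝ) 1)
    (hrc : ∀ x ∈ Set.Ico (0:ℝ) 1, ContinuousWithinAt ρ (Set.Ici x) x) :
    Jstar a b (fun x => ∫ t in (0:ℝ)..x, ρ t)
        (fun x => min (max (ρ x) (a / (1 + a))) (1 / (1 + b)))
      = Jlow ρ (fun x => min (max (ρ x) (a / (1 + a))) (1 / (1 + b))) := by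
  have h1a : (0:ℝ) < 1 + a := by linarith
  have h1b : (0:ℝ) < 1 + b := by linarith
  set α := a / (1 + a) with hαdef
  set β := 1 / (1 + b) with hβdef
  have hα0 : 0 < α := div_pos ha h1a
  have hα1 : α < 1 := by rw [hαdef, div_lt_one h1a]; linarith
  have hβ0 : 0 < β := by rw [hβdef]; positivity
  have hβ1 : β < 1 := by rw [hβdef, div_lt_one h1b]; linarith
  have hαβ : α < β := by
    rw [hαdef, hβdef, div_lt_div_iff₀ h1a h1b]
    nlinarith
  set G : ℝ → ℝ := fun x => min (max (ρ x) α) β with hGdef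
  set p : ℝ → ℝ := fun x => max (α - ρ x) 0 with hpdef
  set q : ℝ → ℝ := fun x => max (ρ x - β) 0 with hqdef
  have hI01 : (0:ℝ) ∈ Set.Icc (0:ℝ) 1 := ⟨le_rfl, zero_le_one⟩
  have hI11 : (1:ℝ) ∈ Set.Icc (0:ℝ) 1 := ⟨zero_le_one, le_rfl⟩
  have hsubIcc : ∀ {x y : ℝ}, x ∈ Set.Icc (0:ℝ) 1 → y ∈ Set.Icc (0:ℝ) 1 →
      Set.uIcc x y ⊆ Set.Icc 0 1 := by
    intro x y hx hy
    rw [← Set.uIcc_of_le zero_le_one] at hx hy ⊢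
    exact Set.uIcc_subset_uIcc hx hy
  -- monotonicity of the auxiliary functions
  have hGmono : MonotoneOn G (Set.Icc 0 1) := fun x hx y hy hxy =>
    min_le_min (max_le_max (hmono hx hy hxy) le_rfl) le_rfl
  have hqmono : MonotoneOn q (Set.Icc 0 1) := fun x hx y hy hxy =>
    max_le_max (by linarith [hmono hx hy hxy]) le_rfl
  have hpanti : AntitoneOn p (Set.Icc 0 1) := fun x hx y hy hxy =>
    max_le_max (by linarith [hmono hx hy hxy]) le_rfl
  -- interval integrability on subintervals of [0,1]
  have hρi : ∀ x ∈ Set.Icc (0:ℝ) 1, ∀ y ∈ Set.Icc (0:ℝ) 1,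
      IntervalIntegrable ρ volume x y := fun x hx y hy =>
    (hmono.mono (hsubIcc hx hy)).intervalIntegrable
  have hGi : ∀ x ∈ Set.Icc (0:ℝ) 1, ∀ y ∈ Set.Icc (0:ℝ) 1,
      IntervalIntegrable G volume x y := fun x hx y hy =>
    (hGmono.mono (hsubIcc hx hy)).intervalIntegrable
  have hqi : ∀ x ∈ Set.Icc (0:ℝ) 1, ∀ y ∈ Set.Icc (0:ℝ) 1,
      IntervalIntegrable q volume x y := fun x hx y hy =>
    (hqmono.mono (hsubIcc hx hy)).intervalIntegrable
  have hpi : ∀ x ∈ Set.Icc (0:ℝ) 1, ∀ y ∈ Set.Icc (0:ℝ) 1,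
      IntervalIntegrable p volume x y := fun x hx y hy =>
    (hpanti.mono (hsubIcc hx hy)).intervalIntegrable
  have hp0 : ∀ t, 0 ≤ p t := fun t => le_max_right _ _
  have hq0 : ∀ t, 0 ≤ q t := fun t => le_max_right _ _
  have hGlb : ∀ x, α ≤ G x := fun x => le_min (le_max_right _ _) hαβ.le
  have hGub : ∀ x, G x ≤ β := fun x => min_le_right _ _
  -- measurability of ρ and G on the restricted measure
  have hρm : AEMeasurable ρ (volume.restrict (Set.Ioc (0:ℝ) 1)) := by
    have h := hρi 0 hI01 1 hI11
    rw [intervalIntegrable_iff_integrableOn_Ioc_of_le zero_le_one] at h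
    exact h.aemeasurable
  have hGm : AEMeasurable G (volume.restrict (Set.Ioc (0:ℝ) 1)) :=
    (hρm.max aemeasurable_const).min aemeasurable_const
  set φ : ℝ → ℝ := fun x => ρ x * Real.log (G x) + (1 - ρ x) * Real.log (1 - G x) with hφdef
  have hφm : AEMeasurable φ (volume.restrict (Set.Ioc (0:ℝ) 1)) := by
    exact (hρm.mul (Real.measurable_log.comp_aemeasurable hGm)).add
      ((aemeasurable_const.sub hρm).mul
        (Real.measurable_log.comp_aemeasurable (aemeasurable_const.sub hGm)))
  -- bounds on the logarithms
  have hlogG : ∀ x, |Real.log (G x)| ≤ -Real.log α := by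
    intro x
    rw [abs_of_nonpos (Real.log_nonpos (le_of_lt (lt_of_lt_of_le hα0 (hGlb x)))
      (le_of_lt (lt_of_le_of_lt (hGub x) hβ1)))]
    have := Real.log_le_log hα0 (hGlb x)
    linarith
  have hlogG' : ∀ x, |Real.log (1 - G x)| ≤ -Real.log (1 - β) := by
    intro x
    rw [abs_of_nonpos (Real.log_nonpos (by linarith [hGub x, hβ1]) (by linarith [hGlb x, hα0]))]
    have := Real.log_le_log (by linarith : (0:ℝ) < 1 - β) (by linarith [hGub x] : 1 - β ≤ 1 - G x)
    linarith
  set C : ℝ := -Real.log α - Real.log (1 - β) with hCdef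
  have hφbd : ∀ x ∈ Set.Ioc (0:ℝ) 1, ‖φ x‖ ≤ C := by
    intro x hx
    obtain ⟨hr0, hr1⟩ := hrange x ⟨hx.1.le, hx.2⟩
    have h1 := hlogG x
    have h2 := hlogG' x
    have h3 : |φ x| ≤ |ρ x| * |Real.log (G x)| + |1 - ρ x| * |Real.log (1 - G x)| := by
      calc |φ x| ≤ |ρ x * Real.log (G x)| + |(1 - ρ x) * Real.log (1 - G x)| := abs_add_le _ _
        _ = |ρ x| * |Real.log (G x)| + |1 - ρ x| * |Real.log (1 - G x)| := by
            rw [abs_mul, abs_mul]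
    have h4 : |ρ x| ≤ 1 := abs_le.mpr ⟨by linarith, hr1⟩
    have h5 : |1 - ρ x| ≤ 1 := abs_le.mpr ⟨by linarith, by linarith⟩
    have h6 : (0:ℝ) ≤ |Real.log (G x)| := abs_nonneg _
    have h7 : (0:ℝ) ≤ |Real.log (1 - G x)| := abs_nonneg _
    rw [Real.norm_eq_abs, hCdef]
    nlinarith
  have hφi : IntervalIntegrable φ volume 0 1 := by
    rw [intervalIntegrable_iff_integrableOn_Ioc_of_le zero_le_one]
    refine Integrable.mono' (integrable_const C) hφm.aestronglyMeasurable ?_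
    filter_upwards [ae_restrict_mem measurableSet_Ioc] with x hx using hφbd x hx
  have hEntcont : Continuous hEnt := by
    have h2 : Continuous fun x : ℝ => (1 - x) * Real.log (1 - x) :=
      Real.continuous_mul_log.comp (continuous_const.sub continuous_id)
    exact Real.continuous_mul_log.add h2
  have hHi : IntervalIntegrable (fun x => hEnt (G x)) volume 0 1 := by
    rw [intervalIntegrable_iff_integrableOn_Ioc_of_le zero_le_one]
    refine Integrable.mono' (integrable_const C)
      (hEntcont.measurable.comp_aemeasurable hGm).aestronglyMeasurable ?_
    filter_upwards [ae_restrict_mem measurableSet_Ioc] with x _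
    have h1 := hlogG x
    have h2 := hlogG' x
    have h3 : |hEnt (G x)| ≤ |G x| * |Real.log (G x)| + |1 - G x| * |Real.log (1 - G x)| := by
      calc |hEnt (G x)| ≤ |G x * Real.log (G x)| + |(1 - G x) * Real.log (1 - G x)| :=
            abs_add_le _ _
        _ = |G x| * |Real.log (G x)| + |1 - G x| * |Real.log (1 - G x)| := by
            rw [abs_mul, abs_mul]
    have h4 : |G x| ≤ 1 := abs_le.mpr ⟨by linarith [hGlb x, hα0], by linarith [hGub x, hβ1]⟩
    have h5 : |1 - G x| ≤ 1 := abs_le.mpr ⟨by linarith [hGub x, hβ1], by linarith [hGlb x, hα0]⟩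
    have h6 : (0:ℝ) ≤ |Real.log (G x)| := abs_nonneg _
    have h7 : (0:ℝ) ≤ |Real.log (1 - G x)| := abs_nonneg _
    rw [Real.norm_eq_abs, hCdef]
    nlinarith
  -- log identities
  have hla : Real.log α - Real.log (1 - α) = Real.log a := by
    have h1 : (1:ℝ) - α = 1 / (1 + a) := by rw [hαdef]; field_simp; ring
    rw [h1, hαdef]
    exact log_ratio a ha
  have hlb : Real.log (1 - β) - Real.log β = Real.log b := by
    have h1 : (1:ℝ) - β = b / (1 + b) := by rw [hβdef]; field_simp; ring
    rw [h1, hβdef]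
    exact log_ratio b hb
  set P : ℝ := ∫ t in (0:ℝ)..1, p t with hPdef
  set Q : ℝ := ∫ t in (0:ℝ)..1, q t with hQdef
  -- key integral identity
  have key : (∫ x in (0:ℝ)..1, hEnt (G x))
      = (∫ x in (0:ℝ)..1, φ x) + Real.log a * P + Real.log b * Q := by
    have comb : (∫ x in (0:ℝ)..1, (φ x + Real.log a * p x + Real.log b * q x))
        = (∫ x in (0:ℝ)..1, φ x) + Real.log a * P + Real.log b * Q := by
      rw [intervalIntegral.integral_add (hφi.add ((hpi 0 hI01 1 hI11).const_mul _))
          ((hqi 0 hI01 1 hI11).const_mul _),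
        intervalIntegral.integral_add hφi ((hpi 0 hI01 1 hI11).const_mul _),
        intervalIntegral.integral_const_mul, intervalIntegral.integral_const_mul]
    rw [← comb]
    apply intervalIntegral.integral_congr
    intro x _
    simp only [hGdef, hpdef, hqdef, hφdef]
    rw [clamp_hEnt α β (ρ x) hαβ.le, hla, hlb]
    ring
  -- pointwise identity for the difference of primitives
  have hFx : ∀ x ∈ Set.Icc (0:ℝ) 1,
      (∫ t in (0:ℝ)..x, ρ t) - (∫ t in (0:ℝ)..x, G t)
        = (∫ t in (0:ℝ)..x, q t) - ∫ t in (0:ℝ)..x, p t := by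
    intro x hx
    rw [← intervalIntegral.integral_sub (hρi 0 hI01 x hx) (hGi 0 hI01 x hx),
      ← intervalIntegral.integral_sub (hqi 0 hI01 x hx) (hpi 0 hI01 x hx)]
    apply intervalIntegral.integral_congr
    intro t _
    simp only [hGdef, hpdef, hqdef]
    exact clamp_sub α β (ρ t) hαβ.le
  have hsplit : ∀ x ∈ Set.Icc (0:ℝ) 1,
      (∫ t in (0:ℝ)..x, p t) + (∫ t in x..1, p t) = P :=
    fun x hx => intervalIntegral.integral_add_adjacent_intervals
      (hpi 0 hI01 x hx) (hpi x hx 1 hI11)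
  -- lower bound
  have hlow : ∀ x ∈ Set.Icc (0:ℝ) 1,
      -P ≤ (∫ t in (0:ℝ)..x, q t) - ∫ t in (0:ℝ)..x, p t := by
    intro x hx
    have h1 : (0:ℝ) ≤ ∫ t in (0:ℝ)..x, q t :=
      intervalIntegral.integral_nonneg hx.1 (fun t _ => hq0 t)
    have h2 : (0:ℝ) ≤ ∫ t in x..1, p t :=
      intervalIntegral.integral_nonneg hx.2 (fun t _ => hp0 t)
    have h3 := hsplit x hx
    linarith
  -- attainment of the minimum
  have hattain : ∃ x ∈ Set.Icc (0:ℝ) 1,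
      (∫ t in (0:ℝ)..x, q t) - (∫ t in (0:ℝ)..x, p t) = -P := by
    by_cases hs : ∃ x ∈ Set.Icc (0:ℝ) 1, ρ x < α
    · obtain ⟨x₀, hx₀, hx₀α⟩ := hs
      have hne : {x | x ∈ Set.Icc (0:ℝ) 1 ∧ ρ x < α}.Nonempty := ⟨x₀, hx₀, hx₀α⟩
      have hbd : BddAbove {x | x ∈ Set.Icc (0:ℝ) 1 ∧ ρ x < α} := ⟨1, fun y hy => hy.1.2⟩
      set x₁ := sSup {x | x ∈ Set.Icc (0:ℝ) 1 ∧ ρ x < α} with hx₁def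
      have hx₁mem : x₁ ∈ Set.Icc (0:ℝ) 1 :=
        ⟨le_trans hx₀.1 (le_csSup hbd ⟨hx₀, hx₀α⟩), csSup_le hne fun y hy => hy.1.2⟩
      have hqzero : ∀ t ∈ Set.Ioo (0:ℝ) x₁, q t = 0 := by
        intro t ht
        obtain ⟨y, hy, hty⟩ := exists_lt_of_lt_csSup hne ht.2
        have hρt : ρ t ≤ ρ y := hmono ⟨ht.1.le, le_trans hty.le hy.1.2⟩ hy.1 hty.le
        simp only [hqdef]
        exact max_eq_right (by linarith [hy.2])
      have hIq : (∫ t in (0:ℝ)..x₁, q t) = 0 := by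
        rw [intervalIntegral.integral_of_le hx₁mem.1, MeasureTheory.integral_Ioc_eq_integral_Ioo,
          MeasureTheory.setIntegral_congr_fun measurableSet_Ioo hqzero]
        simp
      have hpzero : ∀ t ∈ Set.Ioc x₁ 1, p t = 0 := by
        intro t ht
        have htIcc : t ∈ Set.Icc (0:ℝ) 1 := ⟨le_trans hx₁mem.1 ht.1.le, ht.2⟩
        have hαρ : α ≤ ρ t := by
          by_contra hcon
          push_neg at hcon
          exact absurd (le_csSup hbd ⟨htIcc, hcon⟩) (not_le.mpr ht.1)
        simp only [hpdef]
        exact max_eq_right (by linarith)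
      have hIp : (∫ t in x₁..1, p t) = 0 := by
        rw [intervalIntegral.integral_of_le hx₁mem.2,
          MeasureTheory.setIntegral_congr_fun measurableSet_Ioc hpzero]
        simp
      have h3 := hsplit x₁ hx₁mem
      exact ⟨x₁, hx₁mem, by rw [hIq]; linarith⟩
    · push_neg at hs
      have hP0 : P = 0 := by
        rw [hPdef, show (∫ t in (0:ℝ)..1, p t) = ∫ t in (0:ℝ)..1, (0:ℝ) from
          intervalIntegral.integral_congr (fun t ht => by
            rw [Set.uIcc_of_le zero_le_one] at ht
            simp only [hpdef]
            exact max_eq_right (by linarith [hs t ht]))]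
        simp
      exact ⟨0, hI01, by simp [hP0]⟩
  -- the infimum
  have himg : sInf ((fun x => (∫ t in (0:ℝ)..x, ρ t) - ∫ t in (0:ℝ)..x, G t)
      '' Set.Icc 0 1) = -P := by
    obtain ⟨x₁, hx₁, hFx₁⟩ := hattain
    have hbdd : ∀ y ∈ (fun x => (∫ t in (0:ℝ)..x, ρ t) - ∫ t in (0:ℝ)..x, G t)
        '' Set.Icc 0 1, -P ≤ y := by
      rintro y ⟨x, hx, rfl⟩
      dsimp only
      rw [hFx x hx]
      exact hlow x hx
    apply le_antisymm
    · exact csInf_le ⟨-P, hbdd⟩ ⟨x₁, hx₁, by dsimp only; rw [hFx x₁ hx₁]; exact hFx₁⟩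
    · exact le_csInf ((Set.nonempty_Icc.mpr zero_le_one).image _) hbdd
  -- assemble
  simp only [Jstar, Jlow]
  rw [key, himg, hFx 1 hI11, Real.log_mul ha.ne' hb.ne']
  ring
end

section
/- Fix a,b>0 with ab<1. Let ρ:[0,1]→[0,1] be nondecreasing and right-continuous, f(x)=∫_0^x ρ(t)dt, G_*(x)=min(max(ρ(x), a/(1+a)), 1/(1+b)) and g_*(x)=∫_0^x G_*(t)dt. Then for every measurable σ:[0,1]→[0,1] and g(x)=∫_0^x σ(t)dt one has J*(f,g) ≥ J*(f,g_*); consequently the infimum of J*(f,g) over all such g is attained at g_* and equals J_*(f,G_*). -/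
open Finset

section Aux
open MeasureTheory Set intervalIntegral

lemma bddII (f : ℝ → ℝ) (C p q : ℝ) (hf : Measurable f)
    (h : ∀ x ∈ Set.uIcc p q, |f x| ≤ C) : IntervalIntegrable f volume p q := by
  rw [intervalIntegrable_iff]
  apply Integrable.mono' (g := fun _ => C)
  · exact integrableOn_const measure_Ioc_lt_top.ne
  · exact hf.aestronglyMeasurable.restrict
  · refine (ae_restrict_iff' measurableSet_uIoc).mpr ?_
    filter_upwards with x hx
    exact h x (uIoc_subset_uIcc hx)

lemma mul_log_bounds (s : ℝ) (h0 : 0 ≤ s) (h1 : s ≤ 1) :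
    -1 ≤ s * Real.log s ∧ s * Real.log s ≤ 0 := by
  constructor
  · rcases eq_or_lt_of_le h0 with h | h
    · simp [← h]
    · have := Real.log_le_sub_one_of_pos (show (0:ℝ) < 1/s by positivity)
      rw [one_div, Real.log_inv] at this
      have key : s * s⁻¹ = 1 := by field_simp
      nlinarith [mul_le_mul_of_nonneg_left this h.le]
  · rcases eq_or_lt_of_le h0 with h | h
    · simp [← h]
    · exact mul_nonpos_of_nonneg_of_nonpos h0 (Real.log_nonpos h0 h1)

lemma KLcore (s G : ℝ) (hs0 : 0 ≤ s) (hs1 : s ≤ 1) (hG0 : 0 < G) (hG1 : G < 1) :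
    s * Real.log G + (1 - s) * Real.log (1 - G) ≤ hEnt s := by
  have h1 : s * Real.log G - s * Real.log s ≤ G - s := by
    rcases eq_or_lt_of_le hs0 with h | h
    · simp [← h]; positivity
    · have := Real.log_le_sub_one_of_pos (show 0 < G / s by positivity)
      rw [Real.log_div (ne_of_gt hG0) (ne_of_gt h)] at this
      have key : s * (G / s - 1) = G - s := by field_simp
      nlinarith [mul_le_mul_of_nonneg_left this hs0]
  have h2 : (1 - s) * Real.log (1 - G) - (1 - s) * Real.log (1 - s) ≤ s - G := by
    rcases eq_or_lt_of_le hs1 with h | h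
    · rw [← h]; simp; linarith
    · have hs' : 0 < 1 - s := by linarith
      have := Real.log_le_sub_one_of_pos (show 0 < (1 - G) / (1 - s) by
        apply div_pos <;> linarith)
      rw [Real.log_div (by linarith) (ne_of_gt hs')] at this
      have key : (1 - s) * ((1 - G) / (1 - s) - 1) = s - G := by field_simp; ring
      nlinarith [mul_le_mul_of_nonneg_left this hs'.le]
  unfold hEnt; linarith

lemma layer_nonneg (w E : ℝ → ℝ) (p q C : ℝ) (hpq : p ≤ q)
    (hw : Measurable w) (hwb : ∀ x ∈ Icc p q, |w x| ≤ 2)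
    (hE : Monotone E) (hE0 : ∀ x, 0 ≤ E x) (hEC : ∀ x, E x ≤ C)
    (hK : ∀ x ∈ Icc p q, (∫ t in p..x, w t) ≤ ∫ t in p..q, w t) :
    0 ≤ ∫ x in p..q, w x * E x := by
  have hwi : ∀ x ∈ Icc p q, ∀ y ∈ Icc p q, IntervalIntegrable w volume x y := by
    intro x hx y hy
    exact bddII w 2 x y hw fun z hz => hwb z (uIcc_subset_Icc hx hy hz)
  set μ := volume.restrict (Ioc p q) with hμ
  set ν := volume.restrict (Icc 0 C) with hν
  haveI : IsFiniteMeasure μ := ⟨by rw [hμ, Measure.restrict_apply_univ]; exact measure_Ioc_lt_top⟩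
  haveI : IsFiniteMeasure ν := ⟨by rw [hν, Measure.restrict_apply_univ]; exact measure_Icc_lt_top⟩
  set f : ℝ → ℝ → ℝ := fun x s => if s < E x then w x else 0 with hf
  have hEmeas : Measurable E := hE.measurable
  have hSm : MeasurableSet {z : ℝ × ℝ | z.2 < E z.1} :=
    measurableSet_lt measurable_snd (hEmeas.comp measurable_fst)
  have hΦm : Measurable (Function.uncurry f) := by
    have : Function.uncurry f = fun z : ℝ × ℝ =>
        if z ∈ {z : ℝ × ℝ | z.2 < E z.1} then w z.1 else 0 := rfl
    rw [this]
    exact Measurable.ite hSm (hw.comp measurable_fst) measurable_const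
  have hΦint : Integrable (Function.uncurry f) (μ.prod ν) := by
    refine Integrable.mono' (g := fun _ => 2) (integrable_const 2)
      hΦm.aestronglyMeasurable ?_
    rw [hμ, hν, Measure.prod_restrict]
    refine (ae_restrict_iff' (measurableSet_Ioc.prod measurableSet_Icc)).mpr ?_
    filter_upwards with z hz
    have hb := hwb z.1 (Ioc_subset_Icc_self hz.1)
    simp only [Function.uncurry, hf]
    split
    · simpa using hb
    · simp
  -- inner integral in s equals E x
  have hinner : ∀ x, (∫ s, f x s ∂ν) = w x * E x := by
    intro x
    have h1 : (fun s => f x s) = fun s => w x * (Iio (E x)).indicator (fun _ => (1:ℝ)) s := by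
      funext s
      simp only [hf, Set.indicator_apply, Set.mem_Iio]
      split <;> ring
    rw [h1, MeasureTheory.integral_const_mul]
    congr 1
    rw [hν, setIntegral_indicator measurableSet_Iio]
    have h2 : Icc 0 C ∩ Iio (E x) = Ico 0 (E x) := by
      ext s
      constructor
      · rintro ⟨⟨h0, _⟩, hlt⟩; exact ⟨h0, hlt⟩
      · rintro ⟨h0, hlt⟩; exact ⟨⟨h0, le_trans hlt.le (hEC x)⟩, hlt⟩
    rw [h2]
    simp [Real.volume_Ico, hE0 x]
  -- each inner integral in x is nonneg
  have houter : ∀ s, 0 ≤ ∫ x, f x s ∂μ := by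
    intro s
    have h1 : (fun x => f x s) = ({x | s < E x}).indicator w := by
      funext x
      simp only [hf, Set.indicator_apply, mem_setOf_eq]
    have h2 : (∫ x, f x s ∂μ) = ∫ x in Ioc p q ∩ {x | s < E x}, w x := by
      rw [h1, hμ, setIntegral_indicator (measurableSet_lt measurable_const hEmeas)]
    rw [h2]
    set A := Ioc p q ∩ {x | s < E x} with hA
    rcases A.eq_empty_or_nonempty with hAe | hAne
    · rw [hAe]; simp
    · have hbd : BddBelow A := ⟨p, fun x hx => hx.1.1.le⟩
      set t := sInf A with ht
      have hpt : p ≤ t := le_csInf hAne fun x hx => hx.1.1.le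
      have htq : t ≤ q := by
        obtain ⟨y, hy⟩ := hAne
        exact le_trans (csInf_le hbd hy) hy.1.2
      have hsub1 : Ioc t q ⊆ A := by
        intro x hx
        obtain ⟨y, hyA, hyx⟩ := exists_lt_of_csInf_lt hAne hx.1
        exact ⟨⟨lt_trans hyA.1.1 hyx, hx.2⟩, lt_of_lt_of_le hyA.2 (hE hyx.le)⟩
      have hsub2 : A ⊆ Ioc t q ∪ {t} := by
        intro x hx
        rcases eq_or_lt_of_le (csInf_le hbd hx) with h | h
        · exact Or.inr (by rw [← h]; exact ht.symm)
        · exact Or.inl ⟨h, hx.1.2⟩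
      have hae : A =ᵐ[volume] Ioc t q := by
        rw [MeasureTheory.ae_eq_set]
        constructor
        · refine measure_mono_null ?_ (measure_singleton t)
          intro x hx
          rcases hsub2 hx.1 with h | h
          · exact absurd h hx.2
          · exact h
        · rw [diff_eq_empty.mpr hsub1]; exact measure_empty
      rw [setIntegral_congr_set hae, ← integral_of_le htq]
      have hadd : (∫ u in p..t, w u) + (∫ u in t..q, w u) = ∫ u in p..q, w u :=
        integral_add_adjacent_intervals
          (hwi p ⟨le_refl p, hpq⟩ t ⟨hpt, htq⟩) (hwi t ⟨hpt, htq⟩ q ⟨hpq, le_refl q⟩)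
      have := hK t ⟨hpt, htq⟩
      linarith
  calc (0:ℝ) ≤ ∫ s, ∫ x, f x s ∂μ ∂ν := integral_nonneg houter
    _ = ∫ x, ∫ s, f x s ∂ν ∂μ := (integral_integral_swap hΦint).symm
    _ = ∫ x, w x * E x ∂μ := by simp_rw [hinner]
    _ = ∫ x in p..q, w x * E x := (integral_of_le hpq).symm

lemma layer_nonpos (w E : ℝ → ℝ) (p q C : ℝ) (hpq : p ≤ q)
    (hw : Measurable w) (hwb : ∀ x ∈ Icc p q, |w x| ≤ 2)
    (hE : Antitone E) (hE0 : ∀ x, 0 ≤ E x) (hEC : ∀ x, E x ≤ C)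
    (hK : ∀ x ∈ Icc p q, (∫ t in p..x, w t) ≤ 0) :
    (∫ x in p..q, w x * E x) ≤ 0 := by
  have hwi : ∀ x ∈ Icc p q, ∀ y ∈ Icc p q, IntervalIntegrable w volume x y := by
    intro x hx y hy
    exact bddII w 2 x y hw fun z hz => hwb z (uIcc_subset_Icc hx hy hz)
  set μ := volume.restrict (Ioc p q) with hμ
  set ν := volume.restrict (Icc 0 C) with hν
  haveI : IsFiniteMeasure μ := ⟨by rw [hμ, Measure.restrict_apply_univ]; exact measure_Ioc_lt_top⟩
  haveI : IsFiniteMeasure ν := ⟨by rw [hν, Measure.restrict_apply_univ]; exact measure_Icc_lt_top⟩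
  set f : ℝ → ℝ → ℝ := fun x s => if s < E x then w x else 0 with hf
  have hEmeas : Measurable E := hE.measurable
  have hSm : MeasurableSet {z : ℝ × ℝ | z.2 < E z.1} :=
    measurableSet_lt measurable_snd (hEmeas.comp measurable_fst)
  have hΦm : Measurable (Function.uncurry f) := by
    have : Function.uncurry f = fun z : ℝ × ℝ =>
        if z ∈ {z : ℝ × ℝ | z.2 < E z.1} then w z.1 else 0 := rfl
    rw [this]
    exact Measurable.ite hSm (hw.comp measurable_fst) measurable_const
  have hΦint : Integrable (Function.uncurry f) (μ.prod ν) := by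
    refine Integrable.mono' (g := fun _ => 2) (integrable_const 2)
      hΦm.aestronglyMeasurable ?_
    rw [hμ, hν, Measure.prod_restrict]
    refine (ae_restrict_iff' (measurableSet_Ioc.prod measurableSet_Icc)).mpr ?_
    filter_upwards with z hz
    have hb := hwb z.1 (Ioc_subset_Icc_self hz.1)
    simp only [Function.uncurry, hf]
    split
    · simpa using hb
    · simp
  have hinner : ∀ x, (∫ s, f x s ∂ν) = w x * E x := by
    intro x
    have h1 : (fun s => f x s) = fun s => w x * (Iio (E x)).indicator (fun _ => (1:ℝ)) s := by
      funext s
      simp only [hf, Set.indicator_apply, Set.mem_Iio]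
      split <;> ring
    rw [h1, MeasureTheory.integral_const_mul]
    congr 1
    rw [hν, setIntegral_indicator measurableSet_Iio]
    have h2 : Icc 0 C ∩ Iio (E x) = Ico 0 (E x) := by
      ext s
      constructor
      · rintro ⟨⟨h0, _⟩, hlt⟩; exact ⟨h0, hlt⟩
      · rintro ⟨h0, hlt⟩; exact ⟨⟨h0, le_trans hlt.le (hEC x)⟩, hlt⟩
    rw [h2]
    simp [Real.volume_Ico, hE0 x]
  have houter : ∀ s, (∫ x, f x s ∂μ) ≤ 0 := by
    intro s
    have h1 : (fun x => f x s) = ({x | s < E x}).indicator w := by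
      funext x
      simp only [hf, Set.indicator_apply, mem_setOf_eq]
    have h2 : (∫ x, f x s ∂μ) = ∫ x in Ioc p q ∩ {x | s < E x}, w x := by
      rw [h1, hμ, setIntegral_indicator (measurableSet_lt measurable_const hEmeas)]
    rw [h2]
    set A := Ioc p q ∩ {x | s < E x} with hA
    rcases A.eq_empty_or_nonempty with hAe | hAne
    · rw [hAe]; simp
    · have hbd : BddAbove A := ⟨q, fun x hx => hx.1.2⟩
      set t := sSup A with ht
      have htq : t ≤ q := csSup_le hAne fun x hx => hx.1.2
      have hpt : p ≤ t := by
        obtain ⟨y, hy⟩ := hAne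
        exact le_trans hy.1.1.le (le_csSup hbd hy)
      have hsub1 : Ioo p t ⊆ A := by
        intro x hx
        obtain ⟨y, hyA, hxy⟩ := exists_lt_of_lt_csSup hAne hx.2
        exact ⟨⟨hx.1, le_trans hxy.le hyA.1.2⟩, lt_of_lt_of_le hyA.2 (hE hxy.le)⟩
      have hae : A =ᵐ[volume] Ioc p t := by
        rw [MeasureTheory.ae_eq_set]
        constructor
        · have hsub : A ⊆ Ioc p t := fun x hx => mem_Ioc.mpr ⟨hx.1.1, le_csSup hbd hx⟩
          rw [diff_eq_empty.mpr hsub]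
          exact measure_empty
        · refine measure_mono_null ?_ (measure_singleton t)
          intro x hx
          rcases eq_or_lt_of_le hx.1.2 with h | h
          · exact h
          · exact absurd (hsub1 ⟨hx.1.1, h⟩) hx.2
      rw [setIntegral_congr_set hae, ← integral_of_le hpt]
      exact hK t ⟨hpt, htq⟩
  calc (∫ x in p..q, w x * E x) = ∫ x, w x * E x ∂μ := integral_of_le hpq
    _ = ∫ x, ∫ s, f x s ∂ν ∂μ := by simp_rw [hinner]
    _ = ∫ s, ∫ x, f x s ∂μ ∂ν := integral_integral_swap hΦint
    _ ≤ 0 := integral_nonpos houter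

lemma intCongr01 (f g : ℝ → ℝ) (hfg : ∀ x ∈ Icc (0:ℝ) 1, f x = g x) :
    ∀ x ∈ Icc (0:ℝ) 1, (∫ t in (0:ℝ)..x, f t) = ∫ t in (0:ℝ)..x, g t := by
  intro x hx
  apply intervalIntegral.integral_congr
  intro t ht
  rw [uIcc_of_le hx.1] at ht
  exact hfg t ⟨ht.1, le_trans ht.2 hx.2⟩

lemma Jstar_congr (a b : ℝ) (ρ ρ' σ σ' : ℝ → ℝ)
    (hρ : ∀ x ∈ Icc (0:ℝ) 1, ρ x = ρ' x) (hσ : ∀ x ∈ Icc (0:ℝ) 1, σ x = σ' x) :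
    Jstar a b (fun x => ∫ t in (0:ℝ)..x, ρ t) σ
      = Jstar a b (fun x => ∫ t in (0:ℝ)..x, ρ' t) σ' := by
  have h01 : (1:ℝ) ∈ Icc (0:ℝ) 1 := by norm_num
  have e1 : (∫ x in (0:ℝ)..1, hEnt (σ x)) = ∫ x in (0:ℝ)..1, hEnt (σ' x) := by
    apply intervalIntegral.integral_congr
    intro t ht
    rw [uIcc_of_le (by norm_num : (0:ℝ) ≤ 1)] at ht
    show hEnt (σ t) = hEnt (σ' t)
    rw [hσ t ht]
  have e2 : ((fun x => (∫ t in (0:ℝ)..x, ρ t) - ∫ t in (0:ℝ)..x, σ t) '' Icc 0 1)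
      = ((fun x => (∫ t in (0:ℝ)..x, ρ' t) - ∫ t in (0:ℝ)..x, σ' t) '' Icc 0 1) :=
    Set.image_congr fun x hx => by
      rw [intCongr01 ρ ρ' hρ x hx, intCongr01 σ σ' hσ x hx]
  have e3 := intCongr01 ρ ρ' hρ 1 h01
  have e4 := intCongr01 σ σ' hσ 1 h01
  simp only [Jstar]
  rw [e1, e2, e3, e4]

lemma Jlow_congr (ρ ρ' Gf Gf' : ℝ → ℝ)
    (hρ : ∀ x ∈ Icc (0:ℝ) 1, ρ x = ρ' x) (hG : ∀ x ∈ Icc (0:ℝ) 1, Gf x = Gf' x) :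
    Jlow ρ Gf = Jlow ρ' Gf' := by
  simp only [Jlow]
  apply intervalIntegral.integral_congr
  intro t ht
  rw [uIcc_of_le (by norm_num : (0:ℝ) ≤ 1)] at ht
  show ρ t * Real.log (Gf t) + (1 - ρ t) * Real.log (1 - Gf t)
      = ρ' t * Real.log (Gf' t) + (1 - ρ' t) * Real.log (1 - Gf' t)
  rw [hρ t ht, hG t ht]

lemma mainIneq (a b : ℝ) (ha : 0 < a) (hb : 0 < b) (hab : a * b < 1)
    (ρ : ℝ → ℝ) (hm : Monotone ρ) (hr : ∀ x, ρ x ∈ Icc (0:ℝ) 1)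
    (σ : ℝ → ℝ) (hσm : Measurable σ) (hσr : ∀ x, σ x ∈ Icc (0:ℝ) 1) :
    Jlow ρ (fun x => min (max (ρ x) (a / (1 + a))) (1 / (1 + b)))
      ≤ Jstar a b (fun x => ∫ t in (0:ℝ)..x, ρ t) σ := by
  have h1a : (0:ℝ) < 1 + a := by linarith
  have h1b : (0:ℝ) < 1 + b := by linarith
  set α := a / (1 + a) with hαdef
  set β := 1 / (1 + b) with hβdef
  have hα0 : 0 < α := by positivity
  have hβ1 : β < 1 := by rw [hβdef, div_lt_one h1b]; linarith
  have hαβ : α < β := by rw [hαdef, hβdef, div_lt_div_iff₀ h1a h1b]; nlinarith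
  have hα1 : α < 1 := lt_trans hαβ hβ1
  have hβ0 : 0 < β := by positivity
  set G : ℝ → ℝ := fun x => min (max (ρ x) α) β with hGdef
  have hGm : Monotone G := fun x y h => min_le_min (max_le_max (hm h) le_rfl) le_rfl
  have hGlb : ∀ x, α ≤ G x := fun x => le_min (le_max_right _ _) hαβ.le
  have hGub : ∀ x, G x ≤ β := fun x => min_le_right _ _
  have hG0 : ∀ x, 0 < G x := fun x => lt_of_lt_of_le hα0 (hGlb x)
  have hG1 : ∀ x, G x < 1 := fun x => lt_of_le_of_lt (hGub x) hβ1
  set la := Real.log a with hladef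
  set lb := Real.log b with hlbdef
  have hla : Real.log α - Real.log (1 - α) = la := by
    rw [← Real.log_div (ne_of_gt hα0) (by intro h; linarith : (1:ℝ) - α ≠ 0)]
    have e : α / (1 - α) = a := by rw [hαdef]; field_simp; ring
    rw [e]
  have hlb : Real.log β - Real.log (1 - β) = -lb := by
    rw [← Real.log_div (ne_of_gt hβ0) (by intro h; linarith : (1:ℝ) - β ≠ 0)]
    have e : β / (1 - β) = b⁻¹ := by rw [hβdef]; field_simp; rw [show (1:ℝ) + b - 1 = b by ring, div_self hb.ne']
    rw [e, Real.log_inv]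
  set D : ℝ → ℝ := fun x => Real.log (G x) - Real.log (1 - G x) with hDdef
  have hDm : Monotone D := by
    intro x y h
    have h1 := Real.log_le_log (hG0 x) (hGm h)
    have h2 := Real.log_le_log (by linarith [hG1 y] : (0:ℝ) < 1 - G y)
      (by linarith [hGm h] : 1 - G y ≤ 1 - G x)
    simp only [hDdef]; linarith
  have hDla : ∀ x, la ≤ D x := by
    intro x
    have h1 := Real.log_le_log hα0 (hGlb x)
    have h2 := Real.log_le_log (by linarith [hG1 x] : (0:ℝ) < 1 - G x)
      (by linarith [hGlb x] : 1 - G x ≤ 1 - α)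
    simp only [hDdef]; linarith [hla]
  have hDlb : ∀ x, D x ≤ -lb := by
    intro x
    have h1 := Real.log_le_log (hG0 x) (hGub x)
    have h2 := Real.log_le_log (by linarith [hβ1] : (0:ℝ) < 1 - β)
      (by linarith [hGub x] : 1 - β ≤ 1 - G x)
    simp only [hDdef]; linarith [hlb]
  have hρmeas : Measurable ρ := hm.measurable
  have hGmeas : Measurable G := hGm.measurable
  have hDmeas : Measurable D := (Real.measurable_log.comp hGmeas).sub
    (Real.measurable_log.comp (measurable_const.sub hGmeas))
  set w : ℝ → ℝ := fun x => σ x - ρ x with hwdef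
  have hwm : Measurable w := hσm.sub hρmeas
  have hwb : ∀ x, |w x| ≤ 2 := by
    intro x
    have h1 := hr x; have h2 := hσr x
    rw [abs_le]
    constructor <;> simp only [hwdef] <;> [linarith [h1.2, h2.1]; linarith [h1.1, h2.2]]
  have hwi : ∀ p q : ℝ, IntervalIntegrable w volume p q :=
    fun p q => bddII w 2 p q hwm fun x _ => hwb x
  have hρi : ∀ p q : ℝ, IntervalIntegrable ρ volume p q :=
    fun p q => bddII ρ 1 p q hρmeas fun x _ => abs_le.mpr ⟨by linarith [(hr x).1], (hr x).2⟩
  have hσi : ∀ p q : ℝ, IntervalIntegrable σ volume p q :=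
    fun p q => bddII σ 1 p q hσm fun x _ => abs_le.mpr ⟨by linarith [(hσr x).1], (hσr x).2⟩
  have hEntCont : Continuous hEnt := by
    have e : hEnt = fun x : ℝ => x * Real.log x + (1 - x) * Real.log (1 - x) := rfl
    rw [e]
    exact Real.continuous_mul_log.add
      (Real.continuous_mul_log.comp (continuous_const.sub continuous_id))
  set ψ : ℝ → ℝ := fun x => ρ x * Real.log (G x) + (1 - ρ x) * Real.log (1 - G x) with hψdef
  have hψmeas : Measurable ψ :=
    (hρmeas.mul (Real.measurable_log.comp hGmeas)).add
      ((measurable_const.sub hρmeas).mul (Real.measurable_log.comp (measurable_const.sub hGmeas)))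
  set Bψ := -Real.log α - Real.log (1 - β) with hBψdef
  have hψb : ∀ x, |ψ x| ≤ Bψ := by
    intro x
    have hu1 : Real.log α ≤ Real.log (G x) := Real.log_le_log hα0 (hGlb x)
    have hu2 : Real.log (G x) ≤ 0 := Real.log_nonpos (hG0 x).le (hG1 x).le
    have hv1 : Real.log (1 - β) ≤ Real.log (1 - G x) :=
      Real.log_le_log (by linarith) (by linarith [hGub x])
    have hv2 : Real.log (1 - G x) ≤ 0 :=
      Real.log_nonpos (by linarith [hG1 x]) (by linarith [hG0 x])
    have hρx := hr x
    rw [abs_le]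
    constructor
    · simp only [hψdef, hBψdef]
      nlinarith [hρx.1, hρx.2]
    · simp only [hψdef, hBψdef]
      nlinarith [hρx.1, hρx.2, Real.log_nonpos hα0.le hα1.le,
        Real.log_nonpos (by linarith : (0:ℝ) ≤ 1 - β) (by linarith : (1:ℝ) - β ≤ 1)]
  have hψi : ∀ p q : ℝ, IntervalIntegrable ψ volume p q :=
    fun p q => bddII ψ Bψ p q hψmeas fun x _ => hψb x
  set A : ℝ → ℝ := fun x => hEnt (σ x) - ψ x with hAdef
  have hAint : ∀ p q : ℝ, IntervalIntegrable A volume p q := by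
    intro p q
    refine bddII A (2 + Bψ) p q ((hEntCont.measurable.comp hσm).sub hψmeas) ?_
    intro x _
    have h1 := mul_log_bounds (σ x) (hσr x).1 (hσr x).2
    have h2 := mul_log_bounds (1 - σ x) (by linarith [(hσr x).2]) (by linarith [(hσr x).1])
    have h3 := hψb x
    rw [abs_le] at h3 ⊢
    have e : hEnt (σ x) = σ x * Real.log (σ x) + (1 - σ x) * Real.log (1 - σ x) := rfl
    constructor
    · simp only [hAdef, e]; linarith [h1.1, h2.1, h3.2]
    · simp only [hAdef, e]; linarith [h1.2, h2.2, h3.1]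
  have hkcont : Continuous (fun x => ∫ t in (0:ℝ)..x, w t) :=
    intervalIntegral.continuous_primitive hwi 0
  obtain ⟨x₀, hx₀mem, hx₀max⟩ :=
    isCompact_Icc.exists_isMaxOn (⟨0, by norm_num⟩ : (Icc (0:ℝ) 1).Nonempty) hkcont.continuousOn
  have hx₀0 : 0 ≤ x₀ := hx₀mem.1
  have hx₀1 : x₀ ≤ 1 := hx₀mem.2
  have hkmax : ∀ x ∈ Icc (0:ℝ) 1, (∫ t in (0:ℝ)..x, w t) ≤ ∫ t in (0:ℝ)..x₀, w t :=
    fun x hx => hx₀max hx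
  have hFg : ∀ x : ℝ, (∫ t in (0:ℝ)..x, ρ t) - (∫ t in (0:ℝ)..x, σ t)
      = -(∫ t in (0:ℝ)..x, w t) := by
    intro x
    have e : (∫ t in (0:ℝ)..x, w t) = (∫ t in (0:ℝ)..x, σ t) - ∫ t in (0:ℝ)..x, ρ t := by
      simp only [hwdef]
      exact intervalIntegral.integral_sub (hσi 0 x) (hρi 0 x)
    linarith
  have hcont2 : Continuous fun x => (∫ t in (0:ℝ)..x, ρ t) - ∫ t in (0:ℝ)..x, σ t := by
    have e : (fun x => (∫ t in (0:ℝ)..x, ρ t) - ∫ t in (0:ℝ)..x, σ t)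
        = fun x => -(∫ t in (0:ℝ)..x, w t) := funext hFg
    rw [e]; exact hkcont.neg
  have hmle : sInf ((fun x => (∫ t in (0:ℝ)..x, ρ t) - ∫ t in (0:ℝ)..x, σ t) '' Icc 0 1)
      ≤ (∫ t in (0:ℝ)..x₀, ρ t) - ∫ t in (0:ℝ)..x₀, σ t :=
    csInf_le (isCompact_Icc.image hcont2).bddBelow ⟨x₀, hx₀mem, rfl⟩
  have hlab : Real.log (a * b) < 0 := Real.log_neg (by positivity) hab
  have hlabm := mul_le_mul_of_nonpos_left hmle hlab.le
  have hlog_ab : Real.log (a * b) = la + lb := Real.log_mul (ne_of_gt ha) (ne_of_gt hb)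
  have hsplitA := intervalIntegral.integral_add_adjacent_intervals (hAint 0 x₀) (hAint x₀ 1)
  have hsplitw := intervalIntegral.integral_add_adjacent_intervals (hwi 0 x₀) (hwi x₀ 1)
  have hEntInt : (∫ x in (0:ℝ)..1, hEnt (σ x))
      = (∫ x in (0:ℝ)..1, A x) + ∫ x in (0:ℝ)..1, ψ x := by
    rw [← intervalIntegral.integral_add (hAint 0 1) (hψi 0 1)]
    apply intervalIntegral.integral_congr
    intro x _
    simp only [hAdef]; ring
  have hpt1 : ∀ x, w x * (D x - la) ≤ A x - la * w x := by
    intro x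
    have hkl := KLcore (σ x) (G x) (hσr x).1 (hσr x).2 (hG0 x) (hG1 x)
    have c1 : A x - la * w x - w x * (D x - la)
        = hEnt (σ x) - (σ x * Real.log (G x) + (1 - σ x) * Real.log (1 - G x)) := by
      simp only [hAdef, hψdef, hwdef, hDdef]; ring
    linarith [hkl, c1]
  have hpt2 : ∀ x, w x * (D x + lb) ≤ A x + lb * w x := by
    intro x
    have hkl := KLcore (σ x) (G x) (hσr x).1 (hσr x).2 (hG0 x) (hG1 x)
    have c1 : A x + lb * w x - w x * (D x + lb)
        = hEnt (σ x) - (σ x * Real.log (G x) + (1 - σ x) * Real.log (1 - G x)) := by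
      simp only [hAdef, hψdef, hwdef, hDdef]; ring
    linarith [hkl, c1]
  have hwD1 : IntervalIntegrable (fun x => w x * (D x - la)) volume 0 x₀ := by
    refine bddII _ (2 * (-lb - la)) 0 x₀ (hwm.mul (hDmeas.sub measurable_const)) ?_
    intro x _
    rw [abs_mul]
    have h1 : |D x - la| ≤ -lb - la := abs_le.mpr ⟨by linarith [hDla x, hDlb x], by linarith [hDlb x]⟩
    exact mul_le_mul (hwb x) h1 (abs_nonneg _) (by norm_num)
  have hwD2 : IntervalIntegrable (fun x => w x * (D x + lb)) volume x₀ 1 := by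
    refine bddII _ (2 * (-lb - la)) x₀ 1 (hwm.mul (hDmeas.add measurable_const)) ?_
    intro x _
    rw [abs_mul]
    have h1 : |D x + lb| ≤ -lb - la := abs_le.mpr ⟨by linarith [hDla x], by linarith [hDlb x, hDla x]⟩
    exact mul_le_mul (hwb x) h1 (abs_nonneg _) (by norm_num)
  have hT1mono : (∫ x in (0:ℝ)..x₀, w x * (D x - la)) ≤ ∫ x in (0:ℝ)..x₀, (A x - la * w x) :=
    intervalIntegral.integral_mono_on hx₀0 hwD1
      ((hAint 0 x₀).sub ((hwi 0 x₀).const_mul la)) (fun x _ => hpt1 x)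
  have hT2mono : (∫ x in x₀..1, w x * (D x + lb)) ≤ ∫ x in x₀..1, (A x + lb * w x) :=
    intervalIntegral.integral_mono_on hx₀1 hwD2
      ((hAint x₀ 1).add ((hwi x₀ 1).const_mul lb)) (fun x _ => hpt2 x)
  have hS1 : 0 ≤ ∫ x in (0:ℝ)..x₀, w x * (D x - la) := by
    refine layer_nonneg w (fun x => D x - la) 0 x₀ (-lb - la) hx₀0 hwm (fun x _ => hwb x)
      ?_ (fun x => by linarith [hDla x]) (fun x => by linarith [hDlb x]) ?_
    · intro x y h; dsimp only; linarith [hDm h]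
    · intro x hx
      exact hkmax x ⟨hx.1, le_trans hx.2 hx₀1⟩
  have hS2 : 0 ≤ ∫ x in x₀..1, w x * (D x + lb) := by
    have hnp : (∫ x in x₀..1, w x * (-(D x) - lb)) ≤ 0 := by
      refine layer_nonpos w (fun x => -(D x) - lb) x₀ 1 (-lb - la) hx₀1 hwm (fun x _ => hwb x)
        ?_ (fun x => by linarith [hDlb x]) (fun x => by linarith [hDla x]) ?_
      · intro x y h; dsimp only; linarith [hDm h]
      · intro x hx
        have hadd := intervalIntegral.integral_add_adjacent_intervals (hwi 0 x₀) (hwi x₀ x)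
        have hmx := hkmax x ⟨le_trans hx₀0 hx.1, hx.2⟩
        linarith
    have e : (fun x => w x * (D x + lb)) = fun x => -(w x * (-(D x) - lb)) := by
      funext x; ring
    rw [e, intervalIntegral.integral_neg]
    linarith
  have hT1eq : (∫ x in (0:ℝ)..x₀, (A x - la * w x))
      = (∫ x in (0:ℝ)..x₀, A x) - la * ∫ x in (0:ℝ)..x₀, w x := by
    rw [intervalIntegral.integral_sub (hAint 0 x₀) ((hwi 0 x₀).const_mul la),
      intervalIntegral.integral_const_mul]
  have hT2eq : (∫ x in x₀..1, (A x + lb * w x))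
      = (∫ x in x₀..1, A x) + lb * ∫ x in x₀..1, w x := by
    rw [intervalIntegral.integral_add (hAint x₀ 1) ((hwi x₀ 1).const_mul lb),
      intervalIntegral.integral_const_mul]
  have e1 : Real.log (a * b) * ((∫ t in (0:ℝ)..x₀, ρ t) - ∫ t in (0:ℝ)..x₀, σ t)
      = -(la * (∫ t in (0:ℝ)..x₀, w t)) - lb * (∫ t in (0:ℝ)..x₀, w t) := by
    rw [hlog_ab, hFg x₀]; ring
  have e2 : lb * ((∫ t in (0:ℝ)..1, ρ t) - ∫ t in (0:ℝ)..1, σ t)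
      = -(lb * (∫ t in (0:ℝ)..x₀, w t)) - lb * (∫ t in x₀..1, w t) := by
    rw [hFg 1, ← hsplitw]; ring
  have final : (∫ x in (0:ℝ)..1, ψ x)
      ≤ (∫ x in (0:ℝ)..1, hEnt (σ x))
        + Real.log (a * b)
          * sInf ((fun x => (∫ t in (0:ℝ)..x, ρ t) - ∫ t in (0:ℝ)..x, σ t) '' Icc 0 1)
        - lb * ((∫ t in (0:ℝ)..1, ρ t) - ∫ t in (0:ℝ)..1, σ t) := by
    linarith [hlabm, hEntInt, hsplitA, hT1eq, hT2eq, hT1mono, hT2mono, hS1, hS2, e1, e2]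
  exact final

lemma mainEq (a b : ℝ) (ha : 0 < a) (hb : 0 < b) (hab : a * b < 1)
    (ρ : ℝ → ℝ) (hm : Monotone ρ) (hr : ∀ x, ρ x ∈ Icc (0:ℝ) 1) :
    Jstar a b (fun x => ∫ t in (0:ℝ)..x, ρ t)
        (fun x => min (max (ρ x) (a / (1 + a))) (1 / (1 + b)))
      = Jlow ρ (fun x => min (max (ρ x) (a / (1 + a))) (1 / (1 + b))) := by
  have h1a : (0:ℝ) < 1 + a := by linarith
  have h1b : (0:ℝ) < 1 + b := by linarith
  set α := a / (1 + a) with hαdef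
  set β := 1 / (1 + b) with hβdef
  have hα0 : 0 < α := by positivity
  have hβ1 : β < 1 := by rw [hβdef, div_lt_one h1b]; linarith
  have hαβ : α < β := by rw [hαdef, hβdef, div_lt_div_iff₀ h1a h1b]; nlinarith
  have hα1 : α < 1 := lt_trans hαβ hβ1
  have hβ0 : 0 < β := by positivity
  set G : ℝ → ℝ := fun x => min (max (ρ x) α) β with hGdef
  have hGm : Monotone G := fun x y h => min_le_min (max_le_max (hm h) le_rfl) le_rfl
  have hGlb : ∀ x, α ≤ G x := fun x => le_min (le_max_right _ _) hαβ.le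
  have hGub : ∀ x, G x ≤ β := fun x => min_le_right _ _
  have hG0 : ∀ x, 0 < G x := fun x => lt_of_lt_of_le hα0 (hGlb x)
  have hG1 : ∀ x, G x < 1 := fun x => lt_of_le_of_lt (hGub x) hβ1
  set la := Real.log a with hladef
  set lb := Real.log b with hlbdef
  have hla : Real.log α - Real.log (1 - α) = la := by
    rw [← Real.log_div (ne_of_gt hα0) (by intro h; linarith : (1:ℝ) - α ≠ 0)]
    have e : α / (1 - α) = a := by rw [hαdef]; field_simp; ring
    rw [e]
  have hlb : Real.log β - Real.log (1 - β) = -lb := by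
    rw [← Real.log_div (ne_of_gt hβ0) (by intro h; linarith : (1:ℝ) - β ≠ 0)]
    have e : β / (1 - β) = b⁻¹ := by rw [hβdef]; field_simp; rw [show (1:ℝ) + b - 1 = b by ring, div_self hb.ne']
    rw [e, Real.log_inv]
  set D : ℝ → ℝ := fun x => Real.log (G x) - Real.log (1 - G x) with hDdef
  have hρmeas : Measurable ρ := hm.measurable
  have hGmeas : Measurable G := hGm.measurable
  have hlog_ab : Real.log (a * b) = la + lb := Real.log_mul (ne_of_gt ha) (ne_of_gt hb)
  set u : ℝ → ℝ := fun x => ρ x - G x with hudef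
  have humono : Monotone u := by
    intro x y h
    have h1 := hm h
    have e : ∀ z, u z = min (ρ z - α) 0 + max (ρ z - β) 0 := by
      intro z
      simp only [hudef, hGdef, min_def, max_def]
      split_ifs <;> linarith
    rw [e x, e y]
    exact add_le_add (min_le_min (by linarith) le_rfl) (max_le_max (by linarith) le_rfl)
  have humeas : Measurable u := hρmeas.sub hGmeas
  have hui : ∀ p q : ℝ, IntervalIntegrable u volume p q := by
    intro p q
    refine bddII u 2 p q humeas fun x _ => abs_le.mpr ⟨?_, ?_⟩
    · simp only [hudef]; linarith [(hr x).1, hGub x, hβ1]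
    · simp only [hudef]; linarith [(hr x).2, hGlb x, hα0]
  have hρi : ∀ p q : ℝ, IntervalIntegrable ρ volume p q :=
    fun p q => bddII ρ 1 p q hρmeas fun x _ => abs_le.mpr ⟨by linarith [(hr x).1], (hr x).2⟩
  have hGi : ∀ p q : ℝ, IntervalIntegrable G volume p q :=
    fun p q => bddII G 1 p q hGmeas fun x _ =>
      abs_le.mpr ⟨by linarith [hG0 x], (hG1 x).le⟩
  have hFgu : ∀ x : ℝ, (∫ t in (0:ℝ)..x, ρ t) - (∫ t in (0:ℝ)..x, G t)
      = ∫ t in (0:ℝ)..x, u t := by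
    intro x
    have e : (∫ t in (0:ℝ)..x, u t) = (∫ t in (0:ℝ)..x, ρ t) - ∫ t in (0:ℝ)..x, G t := by
      simp only [hudef]
      exact intervalIntegral.integral_sub (hρi 0 x) (hGi 0 x)
    linarith
  -- the crossing point
  set S : Set ℝ := {x | x ∈ Icc (0:ℝ) 1 ∧ 0 ≤ u x} ∪ {1} with hSdef
  have hSne : S.Nonempty := ⟨1, Or.inr rfl⟩
  have hSbd : BddBelow S := by
    refine ⟨0, ?_⟩
    rintro x (⟨hx, _⟩ | hx)
    · exact hx.1
    · rw [mem_singleton_iff] at hx; rw [hx]; norm_num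
  set xs := sInf S with hxsdef
  have hxs0 : 0 ≤ xs := by
    refine le_csInf hSne ?_
    rintro x (⟨hx, _⟩ | hx)
    · exact hx.1
    · rw [mem_singleton_iff] at hx; rw [hx]; norm_num
  have hxs1 : xs ≤ 1 := csInf_le hSbd (Or.inr rfl)
  have hneg : ∀ x, 0 ≤ x → x < xs → u x < 0 := by
    intro x h0 hlt
    by_contra hc
    push_neg at hc
    have hx1 : x ≤ 1 := by linarith
    have : x ∈ S := Or.inl ⟨⟨h0, hx1⟩, hc⟩
    exact absurd (csInf_le hSbd this) (not_le.mpr hlt)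
  have hpos : ∀ x, xs < x → x ≤ 1 → 0 ≤ u x := by
    intro x hlt hle
    obtain ⟨y, hyS, hyx⟩ := exists_lt_of_csInf_lt hSne hlt
    rcases hyS with ⟨_, hy⟩ | hy
    · exact le_trans hy (humono hyx.le)
    · rw [mem_singleton_iff] at hy
      rw [hy] at hyx; linarith
  have hleast : IsLeast
      ((fun x => (∫ t in (0:ℝ)..x, ρ t) - ∫ t in (0:ℝ)..x, G t) '' Icc 0 1)
      ((∫ t in (0:ℝ)..xs, ρ t) - ∫ t in (0:ℝ)..xs, G t) := by
    constructor
    · exact ⟨xs, ⟨hxs0, hxs1⟩, rfl⟩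
    · rintro z ⟨x, hx, rfl⟩
      simp only
      rw [hFgu, hFgu]
      rcases le_total x xs with h | h
      · have hadd := intervalIntegral.integral_add_adjacent_intervals (hui 0 x) (hui x xs)
        have hnonpos : (∫ t in x..xs, u t) ≤ 0 := by
          rw [intervalIntegral.integral_of_le h, ← setIntegral_congr_set Ioo_ae_eq_Ioc]
          apply setIntegral_nonpos measurableSet_Ioo
          intro y hy
          exact (hneg y (le_trans hx.1 hy.1.le) hy.2).le
        linarith
      · have hadd := intervalIntegral.integral_add_adjacent_intervals (hui 0 xs) (hui xs x)
        have hnonneg : 0 ≤ ∫ t in xs..x, u t := by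
          rw [intervalIntegral.integral_of_le h]
          apply setIntegral_nonneg measurableSet_Ioc
          intro y hy
          exact hpos y hy.1 (le_trans hy.2 hx.2)
        linarith
  have hm_eq : sInf ((fun x => (∫ t in (0:ℝ)..x, ρ t) - ∫ t in (0:ℝ)..x, G t) '' Icc 0 1)
      = (∫ t in (0:ℝ)..xs, ρ t) - ∫ t in (0:ℝ)..xs, G t := hleast.csInf_eq
  -- value of the min
  have hminmeas : Measurable (fun x => min (u x) 0) := humeas.min measurable_const
  have hmini : ∀ p q : ℝ, IntervalIntegrable (fun x => min (u x) 0) volume p q := by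
    intro p q
    refine bddII _ 2 p q hminmeas fun x _ => ?_
    have h1 : |u x| ≤ 2 := abs_le.mpr ⟨by simp only [hudef]; linarith [(hr x).1, hGub x, hβ1],
      by simp only [hudef]; linarith [(hr x).2, hGlb x, hα0]⟩
    rw [abs_le] at h1 ⊢
    constructor
    · rcases le_total (u x) 0 with h | h
      · rw [min_eq_left h]; linarith
      · rw [min_eq_right h]; linarith
    · rcases le_total (u x) 0 with h | h
      · rw [min_eq_left h]; linarith
      · rw [min_eq_right h]; linarith
  have hvalue : (∫ t in (0:ℝ)..xs, u t) = ∫ x in (0:ℝ)..1, min (u x) 0 := by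
    have step1 : (∫ t in (0:ℝ)..xs, u t) = ∫ t in (0:ℝ)..xs, min (u t) 0 := by
      rw [intervalIntegral.integral_of_le hxs0, intervalIntegral.integral_of_le hxs0,
        ← setIntegral_congr_set Ioo_ae_eq_Ioc, ← setIntegral_congr_set Ioo_ae_eq_Ioc]
      apply setIntegral_congr_fun measurableSet_Ioo
      intro y hy
      exact (min_eq_left (hneg y hy.1.le hy.2).le).symm
    have step2 : (∫ t in xs..1, min (u t) 0) = 0 := by
      rw [intervalIntegral.integral_of_le hxs1]
      have e : EqOn (fun x => min (u x) 0) (fun _ => (0:ℝ)) (Ioc xs 1) := by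
        intro y hy
        exact min_eq_right (hpos y hy.1 hy.2)
      rw [setIntegral_congr_fun measurableSet_Ioc e]
      simp
    have hadd := intervalIntegral.integral_add_adjacent_intervals (hmini 0 xs) (hmini xs 1)
    rw [step1]
    linarith
  -- pointwise identity
  set ψ : ℝ → ℝ := fun x => ρ x * Real.log (G x) + (1 - ρ x) * Real.log (1 - G x) with hψdef
  have hψmeas : Measurable ψ :=
    (hρmeas.mul (Real.measurable_log.comp hGmeas)).add
      ((measurable_const.sub hρmeas).mul (Real.measurable_log.comp (measurable_const.sub hGmeas)))
  set P : ℝ → ℝ := fun x => hEnt (G x) - ψ x with hPdef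
  have hptid : ∀ x, P x + (Real.log (a * b) * min (u x) 0 - lb * u x) = 0 := by
    intro x
    have e0 : P x = -(u x) * D x := by
      simp only [hPdef, hψdef, hudef, hDdef, hEnt]; ring
    rcases lt_trichotomy (u x) 0 with h | h | h
    · have hρα : ρ x < α := by
        by_contra hc
        push_neg at hc
        have h2 : G x ≤ ρ x := by
          simp only [hGdef]
          rw [max_eq_left hc]
          exact min_le_left _ _
        simp only [hudef] at h; linarith
      have hGα : G x = α := by
        simp only [hGdef]
        rw [max_eq_right hρα.le, min_eq_left hαβ.le]
      have hD : D x = la := by simp only [hDdef]; rw [hGα]; exact hla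
      rw [e0, hD, min_eq_left h.le, hlog_ab]; ring
    · rw [e0, h]; simp
    · have hc : β ≤ max (ρ x) α := by
        by_contra hc
        push_neg at hc
        have h2 : G x = max (ρ x) α := min_eq_left hc.le
        have h3 : ρ x ≤ G x := h2 ▸ le_max_left _ _
        simp only [hudef] at h; linarith
      have hGβ : G x = β := min_eq_right hc
      have hD : D x = -lb := by simp only [hDdef]; rw [hGβ]; exact hlb
      rw [e0, hD, min_eq_right h.le, hlog_ab]; ring
  -- integrability of P
  have hEntCont : Continuous hEnt := by
    have e : hEnt = fun x : ℝ => x * Real.log x + (1 - x) * Real.log (1 - x) := rfl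
    rw [e]
    exact Real.continuous_mul_log.add
      (Real.continuous_mul_log.comp (continuous_const.sub continuous_id))
  set Bψ := -Real.log α - Real.log (1 - β) with hBψdef
  have hψb : ∀ x, |ψ x| ≤ Bψ := by
    intro x
    have hu1 : Real.log α ≤ Real.log (G x) := Real.log_le_log hα0 (hGlb x)
    have hu2 : Real.log (G x) ≤ 0 := Real.log_nonpos (hG0 x).le (hG1 x).le
    have hv1 : Real.log (1 - β) ≤ Real.log (1 - G x) :=
      Real.log_le_log (by linarith) (by linarith [hGub x])
    have hv2 : Real.log (1 - G x) ≤ 0 :=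
      Real.log_nonpos (by linarith [hG1 x]) (by linarith [hG0 x])
    have hρx := hr x
    rw [abs_le]
    constructor
    · simp only [hψdef, hBψdef]
      nlinarith [hρx.1, hρx.2]
    · simp only [hψdef, hBψdef]
      nlinarith [hρx.1, hρx.2, Real.log_nonpos hα0.le hα1.le,
        Real.log_nonpos (by linarith : (0:ℝ) ≤ 1 - β) (by linarith : (1:ℝ) - β ≤ 1)]
  have hψi : ∀ p q : ℝ, IntervalIntegrable ψ volume p q :=
    fun p q => bddII ψ Bψ p q hψmeas fun x _ => hψb x
  have hPi : ∀ p q : ℝ, IntervalIntegrable P volume p q := by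
    intro p q
    refine bddII P (2 + Bψ) p q ((hEntCont.measurable.comp hGmeas).sub hψmeas) ?_
    intro x _
    have h1 := mul_log_bounds (G x) (hG0 x).le (hG1 x).le
    have h2 := mul_log_bounds (1 - G x) (by linarith [hG1 x]) (by linarith [hG0 x])
    have h3 := hψb x
    rw [abs_le] at h3 ⊢
    have e : hEnt (G x) = G x * Real.log (G x) + (1 - G x) * Real.log (1 - G x) := rfl
    constructor
    · simp only [hPdef, e]; linarith [h1.1, h2.1, h3.2]
    · simp only [hPdef, e]; linarith [h1.2, h2.2, h3.1]
  -- integral of pointwise-zero function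
  have hE2 : (∫ x in (0:ℝ)..1, P x) + (Real.log (a * b) * (∫ x in (0:ℝ)..1, min (u x) 0)
      - lb * ∫ x in (0:ℝ)..1, u x) = 0 := by
    have hQi : IntervalIntegrable
        (fun x => Real.log (a * b) * min (u x) 0 - lb * u x) volume 0 1 :=
      ((hmini 0 1).const_mul _).sub ((hui 0 1).const_mul _)
    have esum : (∫ x in (0:ℝ)..1,
        (P x + (Real.log (a * b) * min (u x) 0 - lb * u x))) = 0 := by
      have e : (fun x => P x + (Real.log (a * b) * min (u x) 0 - lb * u x))
          = fun _ => (0:ℝ) := funext hptid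
      rw [e]; simp
    rw [intervalIntegral.integral_add (hPi 0 1) hQi,
      intervalIntegral.integral_sub ((hmini 0 1).const_mul _) ((hui 0 1).const_mul _),
      intervalIntegral.integral_const_mul, intervalIntegral.integral_const_mul] at esum
    linarith [esum]
  have hE1 : (∫ x in (0:ℝ)..1, hEnt (G x))
      = (∫ x in (0:ℝ)..1, P x) + ∫ x in (0:ℝ)..1, ψ x := by
    rw [← intervalIntegral.integral_add (hPi 0 1) (hψi 0 1)]
    apply intervalIntegral.integral_congr
    intro x _
    simp only [hPdef]; ring
  have final : (∫ x in (0:ℝ)..1, hEnt (G x))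
      + Real.log (a * b)
        * sInf ((fun x => (∫ t in (0:ℝ)..x, ρ t) - ∫ t in (0:ℝ)..x, G t) '' Icc 0 1)
      - lb * ((∫ t in (0:ℝ)..1, ρ t) - ∫ t in (0:ℝ)..1, G t)
      = ∫ x in (0:ℝ)..1, ψ x := by
    rw [hm_eq, hFgu xs, hvalue, hFgu 1]
    linarith [hE1, hE2]
  exact final

theorem stmt9 (a b : ℝ) (ha : 0 < a) (hb : 0 < b) (hab : a * b < 1)
    (ρ : ℝ → ℝ) (hmono : MonotoneOn ρ (Set.Icc 0 1))
    (hrange : ∀ x ∈ Set.Icc (0:ℝ) 1, ρ x ∈ Set.Icc (0:ℝ) 1)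
    (hrc : ∀ x ∈ Set.Ico (0:ℝ) 1, ContinuousWithinAt ρ (Set.Ici x) x) :
    (∀ σ : ℝ → ℝ, Measurable σ → (∀ x ∈ Set.Icc (0:ℝ) 1, σ x ∈ Set.Icc (0:ℝ) 1) →
        Jstar a b (fun x => ∫ t in (0:ℝ)..x, ρ t)
            (fun x => min (max (ρ x) (a / (1 + a))) (1 / (1 + b)))
          ≤ Jstar a b (fun x => ∫ t in (0:ℝ)..x, ρ t) σ)
      ∧ Jstar a b (fun x => ∫ t in (0:ℝ)..x, ρ t)
            (fun x => min (max (ρ x) (a / (1 + a))) (1 / (1 + b)))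
          = Jlow ρ (fun x => min (max (ρ x) (a / (1 + a))) (1 / (1 + b))) := by
  set ρh : ℝ → ℝ := fun x => ρ (max 0 (min x 1)) with hρhdef
  have hclampmem : ∀ x : ℝ, max 0 (min x 1) ∈ Icc (0:ℝ) 1 :=
    fun x => ⟨le_max_left _ _, max_le (by norm_num) (min_le_right _ _)⟩
  have hρhm : Monotone ρh := by
    intro x y h
    exact hmono (hclampmem x) (hclampmem y) (max_le_max le_rfl (min_le_min h le_rfl))
  have hρhr : ∀ x, ρh x ∈ Icc (0:ℝ) 1 := fun x => hrange _ (hclampmem x)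
  have hρagree : ∀ x ∈ Icc (0:ℝ) 1, ρ x = ρh x := by
    intro x hx
    simp only [hρhdef]
    rw [min_eq_left hx.2, max_eq_right hx.1]
  have hGagree : ∀ x ∈ Icc (0:ℝ) 1,
      min (max (ρ x) (a / (1 + a))) (1 / (1 + b))
        = min (max (ρh x) (a / (1 + a))) (1 / (1 + b)) := by
    intro x hx
    rw [hρagree x hx]
  have key2 : Jstar a b (fun x => ∫ t in (0:ℝ)..x, ρ t)
      (fun x => min (max (ρ x) (a / (1 + a))) (1 / (1 + b)))
      = Jlow ρ (fun x => min (max (ρ x) (a / (1 + a))) (1 / (1 + b))) := by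
    calc (Jstar a b (fun x => ∫ t in (0:ℝ)..x, ρ t)
          (fun x => min (max (ρ x) (a / (1 + a))) (1 / (1 + b))))
        = Jstar a b (fun x => ∫ t in (0:ℝ)..x, ρh t)
            (fun x => min (max (ρh x) (a / (1 + a))) (1 / (1 + b))) :=
          Jstar_congr a b ρ ρh _ _ hρagree hGagree
      _ = Jlow ρh (fun x => min (max (ρh x) (a / (1 + a))) (1 / (1 + b))) :=
          mainEq a b ha hb hab ρh hρhm hρhr
      _ = Jlow ρ (fun x => min (max (ρ x) (a / (1 + a))) (1 / (1 + b))) :=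
          (Jlow_congr ρ ρh _ _ hρagree hGagree).symm
  refine ⟨?_, key2⟩
  intro σ hσm hσr
  set σh : ℝ → ℝ := fun x => max 0 (min (σ x) 1) with hσhdef
  have hσhm : Measurable σh := measurable_const.max (hσm.min measurable_const)
  have hσhr : ∀ x, σh x ∈ Icc (0:ℝ) 1 :=
    fun x => ⟨le_max_left _ _, max_le zero_le_one (min_le_right _ _)⟩
  have hσagree : ∀ x ∈ Icc (0:ℝ) 1, σ x = σh x := by
    intro x hx
    have h := hσr x hx
    simp only [hσhdef]
    rw [min_eq_left h.2, max_eq_right h.1]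
  calc (Jstar a b (fun x => ∫ t in (0:ℝ)..x, ρ t)
        (fun x => min (max (ρ x) (a / (1 + a))) (1 / (1 + b))))
      = Jlow ρ (fun x => min (max (ρ x) (a / (1 + a))) (1 / (1 + b))) := key2
    _ = Jlow ρh (fun x => min (max (ρh x) (a / (1 + a))) (1 / (1 + b))) :=
        Jlow_congr ρ ρh _ _ hρagree hGagree
    _ ≤ Jstar a b (fun x => ∫ t in (0:ℝ)..x, ρh t) σh :=
        mainIneq a b ha hb hab ρh hρhm hρhr σh hσhm hσhr
    _ = Jstar a b (fun x => ∫ t in (0:ℝ)..x, ρ t) σ :=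
        (Jstar_congr a b ρ ρh σ σh hρagree hσagree).symm

end Aux
end

section
/- Let a,b>0 with ab≥1 and let y∈(0,1). Then the minimum over F∈[0,y] and G∈[F, F+1−y] of the quantity y·h(F/y) − F·log(ab) + (1−y)·h((G−F)/(1−y)) + G·log b equals y·log(1/(1+a)) + (1−y)·log(b/(1+b)), and this minimum is attained at F = a·y/(1+a) and G = F + (1−y)/(1+b). -/
lemma hEnt_key (t p : ℝ) (ht : 0 < t) (hp0 : 0 ≤ p) (hp1 : p ≤ 1) :
    -Real.log (1 + t) ≤ hEnt p - p * Real.log t := by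
  have ht1 : (0:ℝ) < 1 + t := by linarith
  have hlog : (0:ℝ) ≤ Real.log (1 + t) := Real.log_nonneg (by linarith)
  rcases eq_or_lt_of_le hp0 with h0 | h0
  · simp [hEnt, ← h0]; linarith
  rcases eq_or_lt_of_le hp1 with h1 | h1
  · subst h1
    have : Real.log t ≤ Real.log (1 + t) := Real.log_le_log ht (by linarith)
    simp [hEnt]; linarith
  have h1p : (0:ℝ) < 1 - p := by linarith
  have e1 : Real.log (t / (p * (1 + t))) = Real.log t - (Real.log p + Real.log (1 + t)) := by
    rw [Real.log_div ht.ne' (by positivity), Real.log_mul h0.ne' ht1.ne']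
  have e2 : Real.log (1 / ((1 - p) * (1 + t))) = -(Real.log (1 - p) + Real.log (1 + t)) := by
    rw [Real.log_div one_ne_zero (by positivity), Real.log_mul h1p.ne' ht1.ne', Real.log_one]
    ring
  have hA := Real.log_le_sub_one_of_pos (show (0:ℝ) < t / (p * (1 + t)) by positivity)
  have hB := Real.log_le_sub_one_of_pos (show (0:ℝ) < 1 / ((1 - p) * (1 + t)) by positivity)
  rw [e1] at hA
  rw [e2] at hB
  have hA' := mul_le_mul_of_nonneg_left hA h0.le
  have hB' := mul_le_mul_of_nonneg_left hB h1p.le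
  have eA : p * (t / (p * (1 + t)) - 1) = t / (1 + t) - p := by
    field_simp
  have eB : (1 - p) * (1 / ((1 - p) * (1 + t)) - 1) = 1 / (1 + t) - (1 - p) := by
    field_simp
  rw [eA] at hA'
  rw [eB] at hB'
  have hsum : t / (1 + t) + 1 / (1 + t) = 1 := by field_simp; ring
  simp only [hEnt]
  nlinarith [hA', hB']

lemma hEnt_eq (t : ℝ) (ht : 0 < t) :
    hEnt (t / (1 + t)) - (t / (1 + t)) * Real.log t = -Real.log (1 + t) := by
  have ht1 : (0:ℝ) < 1 + t := by linarith
  have h1 : 1 - t / (1 + t) = 1 / (1 + t) := by field_simp; ring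
  rw [hEnt, h1, Real.log_div ht.ne' ht1.ne', Real.log_div one_ne_zero ht1.ne', Real.log_one]
  field_simp
  ring

lemma hEnt_key2 (b q : ℝ) (hb : 0 < b) (hq0 : 0 ≤ q) (hq1 : q ≤ 1) :
    Real.log b - Real.log (1 + b) ≤ hEnt q + q * Real.log b := by
  have h := hEnt_key (1/b) q (by positivity) hq0 hq1
  have e1 : Real.log (1/b) = -Real.log b := by rw [one_div, Real.log_inv]
  have e2 : (1:ℝ) + 1/b = (1 + b)/b := by field_simp; ring
  rw [e1, e2, Real.log_div (by positivity) hb.ne'] at h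
  linarith

lemma hEnt_eq2 (b : ℝ) (hb : 0 < b) :
    hEnt (1 / (1 + b)) + (1 / (1 + b)) * Real.log b = Real.log b - Real.log (1 + b) := by
  have hb1 : (0:ℝ) < 1 + b := by linarith
  have h1 : (1:ℝ) - 1 / (1 + b) = b / (1 + b) := by field_simp; ring
  rw [hEnt, h1, Real.log_div one_ne_zero hb1.ne', Real.log_div hb.ne' hb1.ne', Real.log_one]
  field_simp
  ring

theorem stmt11 (a b : ℝ) (ha : 0 < a) (hb : 0 < b) (hab : 1 ≤ a * b)
    (y : ℝ) (hy : y ∈ Set.Ioo (0:ℝ) 1) :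
    IsLeast
      {v : ℝ | ∃ F G : ℝ, F ∈ Set.Icc 0 y ∧ G ∈ Set.Icc F (F + 1 - y) ∧
        v = y * hEnt (F / y) - F * Real.log (a * b)
            + (1 - y) * hEnt ((G - F) / (1 - y)) + G * Real.log b}
      (y * Real.log (1 / (1 + a)) + (1 - y) * Real.log (b / (1 + b)))
    ∧ (y * hEnt ((a * y / (1 + a)) / y) - (a * y / (1 + a)) * Real.log (a * b)
        + (1 - y) * hEnt (((a * y / (1 + a) + (1 - y) / (1 + b)) - a * y / (1 + a)) / (1 - y))
        + (a * y / (1 + a) + (1 - y) / (1 + b)) * Real.log b)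
      = y * Real.log (1 / (1 + a)) + (1 - y) * Real.log (b / (1 + b)) := by
  obtain ⟨hy0, hy1⟩ := hy
  have h1y : (0:ℝ) < 1 - y := by linarith
  have ha1 : (0:ℝ) < 1 + a := by linarith
  have hb1 : (0:ℝ) < 1 + b := by linarith
  have hFy : (a * y / (1 + a)) / y = a / (1 + a) := by
    field_simp
  have hGF : ((a * y / (1 + a) + (1 - y) / (1 + b)) - a * y / (1 + a)) / (1 - y) = 1 / (1 + b) := by
    rw [add_sub_cancel_left, div_right_comm, div_self h1y.ne']
  have hla : Real.log (1 / (1 + a)) = -Real.log (1 + a) := by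
    rw [one_div, Real.log_inv]
  have hlb : Real.log (b / (1 + b)) = Real.log b - Real.log (1 + b) :=
    Real.log_div hb.ne' hb1.ne'
  have hlab : Real.log (a * b) = Real.log a + Real.log b := Real.log_mul ha.ne' hb.ne'
  have heqa : hEnt (a / (1 + a)) = (a / (1 + a)) * Real.log a - Real.log (1 + a) := by
    have := hEnt_eq a ha
    linarith
  have heqb : hEnt (1 / (1 + b)) = Real.log b - Real.log (1 + b)
      - (1 / (1 + b)) * Real.log b := by
    have := hEnt_eq2 b hb
    linarith
  have hval : (y * hEnt ((a * y / (1 + a)) / y) - (a * y / (1 + a)) * Real.log (a * b)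
        + (1 - y) * hEnt (((a * y / (1 + a) + (1 - y) / (1 + b)) - a * y / (1 + a)) / (1 - y))
        + (a * y / (1 + a) + (1 - y) / (1 + b)) * Real.log b)
      = y * Real.log (1 / (1 + a)) + (1 - y) * Real.log (b / (1 + b)) := by
    rw [hFy, hGF, hla, hlb, hlab, heqa, heqb]
    field_simp
    ring
  refine ⟨⟨⟨a * y / (1 + a), a * y / (1 + a) + (1 - y) / (1 + b), ?_, ?_, hval.symm⟩, ?_⟩, hval⟩
  · constructor
    · positivity
    · rw [div_le_iff₀ ha1]; nlinarith
  · constructor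
    · have : (0:ℝ) ≤ (1 - y) / (1 + b) := by positivity
      linarith
    · have : (1 - y) / (1 + b) ≤ 1 - y := by
        rw [div_le_iff₀ hb1]; nlinarith
      linarith
  · rintro v ⟨F, G, ⟨hF0, hFy'⟩, ⟨hGF0, hGF1⟩, hv⟩
    obtain ⟨p, rfl⟩ : ∃ p, F = p * y := ⟨F / y, (div_mul_cancel₀ F hy0.ne').symm⟩
    obtain ⟨q, rfl⟩ : ∃ q, G = p * y + q * (1 - y) := by
      refine ⟨(G - p * y) / (1 - y), ?_⟩
      rw [div_mul_cancel₀ _ h1y.ne']; ring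
    have hp0 : 0 ≤ p := by
      by_contra h
      push_neg at h
      nlinarith
    have hp1 : p ≤ 1 := le_of_mul_le_mul_right (by linarith) hy0
    have hq0 : 0 ≤ q := by
      by_contra h
      push_neg at h
      nlinarith
    have hq1 : q ≤ 1 := le_of_mul_le_mul_right (by linarith) h1y
    have ep : p * y / y = p := mul_div_cancel_right₀ p hy0.ne'
    have eq' : (p * y + q * (1 - y) - p * y) / (1 - y) = q := by
      rw [add_sub_cancel_left, mul_div_cancel_right₀ q h1y.ne']
    have hv2 : v = y * (hEnt p - p * Real.log a) + (1 - y) * (hEnt q + q * Real.log b) := by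
      rw [hv, hlab, ep, eq']
      ring
    have A := mul_le_mul_of_nonneg_left (hEnt_key a p ha hp0 hp1) hy0.le
    have B := mul_le_mul_of_nonneg_left (hEnt_key2 b q hb hq0 hq1) h1y.le
    rw [hla, hlb, hv2]
    linarith [A, B]
end

section
/- Let a,b>0 with ab≥1. Then the minimum over y∈[0,1], F∈[0,y] and G∈[F, F+1−y] of the quantity y·h(F/y) + (1−y)·h((G−F)/(1−y)) + F·log a + y·log(1/(1+a)) + (1−y)·log(b/(1+b)) − (G−F)·log b equals log(min{a/(1+a)², b/(1+b)²}) = log( (max(a,b)) / (1+max(a,b))² ). (When y=0 the term y·h(F/y) is interpreted as 0, with necessarily F=0; similarly when y=1 the term (1−y)·h((G−F)/(1−y)) is interpreted as 0, with necessarily G=F.) -/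
lemma klaux {x p : ℝ} (hx : 0 ≤ x) (hp : 0 < p) : x - p ≤ x * Real.log (x / p) := by
  rcases eq_or_lt_of_le hx with h | h
  · simp [← h]; linarith
  · have h1 : Real.log (p / x) ≤ p / x - 1 := Real.log_le_sub_one_of_pos (by positivity)
    have h2 : Real.log (p / x) = - Real.log (x / p) := by
      rw [← Real.log_inv]
      congr 1
      field_simp
    have h3 : x * (p / x) = p := by field_simp
    nlinarith [mul_le_mul_of_nonneg_left h1 h.le]

lemma mullogdiv (x p : ℝ) (hp : p ≠ 0) :
    x * Real.log (x / p) = x * Real.log x - x * Real.log p := by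
  rcases eq_or_ne x 0 with h | h
  · simp [h]
  · rw [Real.log_div h hp]; ring

lemma gibbs {c : ℝ} (x : ℝ) (hc : 0 < c) (hx0 : 0 ≤ x) (hx1 : x ≤ 1) :
    -Real.log (1 + c) ≤ hEnt x - x * Real.log c := by
  have h1c : (0:ℝ) < 1 + c := by linarith
  have hp : (0:ℝ) < c / (1 + c) := by positivity
  have hq : (0:ℝ) < 1 / (1 + c) := by positivity
  have k1 := klaux hx0 hp
  have k2 := klaux (by linarith : (0:ℝ) ≤ 1 - x) hq
  have e1 := mullogdiv x (c / (1 + c)) hp.ne'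
  have e2 := mullogdiv (1 - x) (1 / (1 + c)) hq.ne'
  have lp : Real.log (c / (1 + c)) = Real.log c - Real.log (1 + c) :=
    Real.log_div hc.ne' h1c.ne'
  have lq : Real.log (1 / (1 + c)) = -Real.log (1 + c) := by
    rw [Real.log_div one_ne_zero h1c.ne', Real.log_one]; ring
  rw [lp] at e1
  rw [lq] at e2
  have hsum : c / (1 + c) + 1 / (1 + c) = 1 := by field_simp; ring
  unfold hEnt
  nlinarith [k1, k2, e1, e2]

/-- Core bound: for `0 ≤ D ≤ z ≤ 1`,
`z * hEnt (D/z) - D * log c + z * log (c/(1+c)) ≥ z * log (c/(1+c)^2)`. -/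
lemma part {c : ℝ} (z D : ℝ) (hc : 0 < c) (hz0 : 0 ≤ z) (hD0 : 0 ≤ D) (hDz : D ≤ z) :
    z * Real.log (c / (1 + c) ^ 2) ≤
      z * hEnt (D / z) - D * Real.log c + z * Real.log (c / (1 + c)) := by
  have h1c : (0:ℝ) < 1 + c := by linarith
  rcases eq_or_lt_of_le hz0 with h | h
  · have hD : D = 0 := le_antisymm (h ▸ hDz) hD0
    simp [← h, hD]
  · have hx0 : 0 ≤ D / z := div_nonneg hD0 h.le
    have hx1 : D / z ≤ 1 := (div_le_one h).2 hDz
    have hg := gibbs (D / z) hc hx0 hx1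
    have hmul := mul_le_mul_of_nonneg_left hg h.le
    have hzx : z * (D / z) = D := by field_simp
    have l1 : Real.log (c / (1 + c) ^ 2) = Real.log c - 2 * Real.log (1 + c) := by
      rw [Real.log_div hc.ne' (by positivity), Real.log_pow]; push_cast; ring
    have l2 : Real.log (c / (1 + c)) = Real.log c - Real.log (1 + c) :=
      Real.log_div hc.ne' h1c.ne'
    have h4 : z * (D / z * Real.log c) = D * Real.log c := by
      field_simp
    rw [l1, l2]
    nlinarith [hmul, h4]

/-- Equality at the optimal point. -/
lemma partEq {c : ℝ} (hc : 0 < c) :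
    hEnt (c / (1 + c)) - (c / (1 + c)) * Real.log c + Real.log (c / (1 + c))
      = Real.log (c / (1 + c) ^ 2) := by
  have h1c : (0:ℝ) < 1 + c := by linarith
  have hg : (1:ℝ) - c / (1 + c) = 1 / (1 + c) := by field_simp; ring
  have l1 : Real.log (c / (1 + c)) = Real.log c - Real.log (1 + c) :=
    Real.log_div hc.ne' h1c.ne'
  have l2 : Real.log (1 / (1 + c)) = -Real.log (1 + c) := by
    rw [Real.log_div one_ne_zero h1c.ne', Real.log_one]; ring
  have l3 : Real.log (c / (1 + c) ^ 2) = Real.log c - 2 * Real.log (1 + c) := by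
    rw [Real.log_div hc.ne' (by positivity), Real.log_pow]; push_cast; ring
  unfold hEnt
  rw [hg, l1, l2, l3]
  field_simp
  ring

theorem stmt12 (a b : ℝ) (ha : 0 < a) (hb : 0 < b) (hab : 1 ≤ a * b) :
    IsLeast
      {v : ℝ | ∃ y F G : ℝ, y ∈ Set.Icc (0:ℝ) 1 ∧ F ∈ Set.Icc 0 y ∧
        G ∈ Set.Icc F (F + 1 - y) ∧
        v = y * hEnt (F / y) + (1 - y) * hEnt ((G - F) / (1 - y))
            + F * Real.log a + y * Real.log (1 / (1 + a))
            + (1 - y) * Real.log (b / (1 + b)) - (G - F) * Real.log b}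
      (Real.log (min (a / (1 + a) ^ 2) (b / (1 + b) ^ 2)))
    ∧ min (a / (1 + a) ^ 2) (b / (1 + b) ^ 2) = max a b / (1 + max a b) ^ 2 := by
  have h1a : (0:ℝ) < 1 + a := by linarith
  have h1b : (0:ℝ) < 1 + b := by linarith
  have hA : (0:ℝ) < a / (1 + a) ^ 2 := by positivity
  have hB : (0:ℝ) < b / (1 + b) ^ 2 := by positivity
  have hia : (0:ℝ) < 1 / a := by positivity
  -- rewriting facts for the `c = 1/a` instance of `part`
  have ra1 : (1/a) / (1 + 1/a) ^ 2 = a / (1 + a) ^ 2 := by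
    field_simp; ring
  have ra2 : (1/a) / (1 + 1/a) = 1 / (1 + a) := by
    field_simp; ring
  have rla : Real.log (1 / a) = -Real.log a := by
    rw [Real.log_div one_ne_zero ha.ne', Real.log_one]; ring
  constructor
  constructor
  · -- membership
    rcases le_total (a / (1 + a) ^ 2) (b / (1 + b) ^ 2) with hmin | hmin
    · rw [min_eq_left hmin]
      refine ⟨1, 1 / (1 + a), 1 / (1 + a), ?_, ?_, ?_, ?_⟩
      · exact ⟨zero_le_one, le_refl 1⟩
      · constructor
        · positivity
        · rw [div_le_one h1a]; linarith
      · simp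
      · have he := partEq hia
        rw [ra1, ra2, rla] at he
        have hF1 : (1 / (1 + a)) / (1:ℝ) = 1 / (1 + a) := by ring
        rw [hF1]
        have : (1:ℝ) - 1 = 0 := by ring
        simp only [sub_self, zero_mul, zero_div, one_mul]
        linarith [he]
    · rw [min_eq_right hmin]
      refine ⟨0, 0, b / (1 + b), ?_, ?_, ?_, ?_⟩
      · exact ⟨le_refl 0, zero_le_one⟩
      · exact ⟨le_refl 0, le_refl 0⟩
      · constructor
        · positivity
        · have : b / (1 + b) ≤ 1 := by rw [div_le_one h1b]; linarith
          linarith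
      · have he := partEq hb
        simp only [sub_zero, zero_mul, zero_div, sub_self, mul_zero, one_mul, zero_add]
        rw [div_one]
        linarith [he]
  · -- lower bound
    rintro v ⟨y, F, G, hy, hF, hG, hv⟩
    have h1 := part (c := 1/a) y F hia hy.1 hF.1 hF.2
    rw [ra1, ra2, rla] at h1
    have h2 := part (c := b) (1 - y) (G - F) hb (by linarith [hy.2])
      (by linarith [hG.1]) (by linarith [hG.2])
    -- v ≥ y * log A + (1-y) * log B
    have hv' : y * Real.log (a / (1 + a) ^ 2) + (1 - y) * Real.log (b / (1 + b) ^ 2) ≤ v := by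
      rw [hv]; linarith [h1, h2]
    rcases le_total (a / (1 + a) ^ 2) (b / (1 + b) ^ 2) with hm | hm
    · rw [min_eq_left hm]
      have hlog : Real.log (a / (1 + a) ^ 2) ≤ Real.log (b / (1 + b) ^ 2) :=
        Real.log_le_log hA hm
      nlinarith [mul_le_mul_of_nonneg_left hlog (by linarith [hy.2] : (0:ℝ) ≤ 1 - y)]
    · rw [min_eq_right hm]
      have hlog : Real.log (b / (1 + b) ^ 2) ≤ Real.log (a / (1 + a) ^ 2) :=
        Real.log_le_log hB hm
      nlinarith [mul_le_mul_of_nonneg_left hlog hy.1]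
  · -- min A B = max a b / (1 + max a b)^2
    rcases le_total a b with h | h
    · rw [max_eq_right h]
      rw [min_eq_right]
      rw [div_le_div_iff₀ (by positivity) (by positivity)]
      nlinarith [mul_nonneg (sub_nonneg.2 h) (sub_nonneg.2 hab)]
    · rw [max_eq_left h]
      rw [min_eq_left]
      rw [div_le_div_iff₀ (by positivity) (by positivity)]
      nlinarith [mul_nonneg (sub_nonneg.2 h) (sub_nonneg.2 hab)]
end

section
/- Let a,b>0 with ab≤1 and let r∈[0,1]. Then min_{m∈[0,1]} { h(m) + max( (r−m)·log a, (m−r)·log b ) } equals: r·log a − log(1+a) if 0≤r≤a/(1+a); h(r) if a/(1+a)≤r≤1/(1+b); and (1−r)·log b − log(1+b) if 1/(1+b)≤r≤1. -/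
lemma log_le_aux (t q : ℝ) (ht : 0 ≤ t) (hq : 0 < q) :
    t * Real.log q - t * Real.log t ≤ q - t := by
  rcases eq_or_lt_of_le ht with h | h
  · simp [← h, hq.le]
  · have hd : Real.log q - Real.log t = Real.log (q / t) := (Real.log_div hq.ne' h.ne').symm
    have h2 : Real.log (q / t) ≤ q / t - 1 := Real.log_le_sub_one_of_pos (by positivity)
    have h3 : t * (Real.log q - Real.log t) ≤ t * (q / t - 1) := by
      rw [hd]; exact mul_le_mul_of_nonneg_left h2 ht
    have h4 : t * (q / t - 1) = q - t := by field_simp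
    nlinarith

lemma gibbs_s13 (p m : ℝ) (hp0 : 0 < p) (hp1 : p < 1) (hm0 : 0 ≤ m) (hm1 : m ≤ 1) :
    m * Real.log p + (1 - m) * Real.log (1 - p) ≤ hEnt m := by
  have h1 := log_le_aux m p hm0 hp0
  have h2 := log_le_aux (1 - m) (1 - p) (by linarith) (by linarith)
  unfold hEnt; nlinarith

lemma hEnt_frac (a : ℝ) (ha : 0 < a) :
    hEnt (a / (1 + a)) = a / (1 + a) * Real.log a - Real.log (1 + a) := by
  have h1 : (0:ℝ) < 1 + a := by linarith
  have h2 : 1 - a / (1 + a) = 1 / (1 + a) := by field_simp; ring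
  unfold hEnt
  rw [h2, Real.log_div ha.ne' h1.ne', Real.log_div one_ne_zero h1.ne', Real.log_one]
  field_simp
  ring

lemma hEnt_symm (m : ℝ) : hEnt (1 - m) = hEnt m := by
  unfold hEnt
  have : 1 - (1 - m) = m := by ring
  rw [this]; ring

lemma gibbsA (a m : ℝ) (ha : 0 < a) (hm0 : 0 ≤ m) (hm1 : m ≤ 1) :
    m * Real.log a - Real.log (1 + a) ≤ hEnt m := by
  have h1a : (0:ℝ) < 1 + a := by linarith
  have hp0 : 0 < a / (1 + a) := by positivity
  have hp1 : a / (1 + a) < 1 := by rw [div_lt_one h1a]; linarith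
  have h := gibbs_s13 (a / (1 + a)) m hp0 hp1 hm0 hm1
  rw [show 1 - a / (1 + a) = 1 / (1 + a) from by field_simp; ring,
      Real.log_div ha.ne' h1a.ne', Real.log_div one_ne_zero h1a.ne', Real.log_one] at h
  nlinarith

lemma gibbsB (b m : ℝ) (hb : 0 < b) (hm0 : 0 ≤ m) (hm1 : m ≤ 1) :
    (1 - m) * Real.log b - Real.log (1 + b) ≤ hEnt m := by
  have h := gibbsA b (1 - m) hb (by linarith) (by linarith)
  rw [hEnt_symm] at h
  exact h

theorem stmt13 (a b : ℝ) (ha : 0 < a) (hb : 0 < b) (hab : a * b ≤ 1)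
    (r : ℝ) (hr : r ∈ Set.Icc (0:ℝ) 1) :
    IsLeast
      {v : ℝ | ∃ m ∈ Set.Icc (0:ℝ) 1,
        v = hEnt m + max ((r - m) * Real.log a) ((m - r) * Real.log b)}
      (if r ≤ a / (1 + a) then r * Real.log a - Real.log (1 + a)
       else if r ≤ 1 / (1 + b) then hEnt r
       else (1 - r) * Real.log b - Real.log (1 + b)) := by
  obtain ⟨hr0, hr1⟩ := hr
  have h1a : (0:ℝ) < 1 + a := by linarith
  have h1b : (0:ℝ) < 1 + b := by linarith
  have hlab : Real.log a + Real.log b ≤ 0 := by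
    rw [← Real.log_mul ha.ne' hb.ne']
    exact Real.log_nonpos (by positivity) hab
  constructor
  · -- membership
    split_ifs with h1 h2
    · refine ⟨a / (1 + a), ⟨by positivity, by rw [div_le_one h1a]; linarith⟩, ?_⟩
      rw [hEnt_frac a ha]
      have hd : 0 ≤ a / (1 + a) - r := by linarith
      have hmax : max ((r - a / (1 + a)) * Real.log a) ((a / (1 + a) - r) * Real.log b)
          = (r - a / (1 + a)) * Real.log a := by
        apply max_eq_left
        nlinarith [mul_nonneg hd (neg_nonneg.mpr hlab)]
      rw [hmax]; ring
    · exact ⟨r, ⟨hr0, hr1⟩, by simp⟩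
    · refine ⟨1 / (1 + b), ⟨by positivity, by rw [div_le_one h1b]; linarith⟩, ?_⟩
      have hE : hEnt (1 / (1 + b)) = b / (1 + b) * Real.log b - Real.log (1 + b) := by
        rw [show (1:ℝ) / (1 + b) = 1 - b / (1 + b) from by field_simp; ring, hEnt_symm,
          hEnt_frac b hb]
      have hd : 0 ≤ r - 1 / (1 + b) := by
        have := lt_of_not_ge h2; linarith
      have hmax : max ((r - 1 / (1 + b)) * Real.log a) ((1 / (1 + b) - r) * Real.log b)
          = (1 / (1 + b) - r) * Real.log b := by
        apply max_eq_right
        nlinarith [mul_nonneg hd (neg_nonneg.mpr hlab)]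
      rw [hE, hmax]
      have hs2 : b / (1 + b) * Real.log b + 1 / (1 + b) * Real.log b = Real.log b := by
        rw [← add_mul, show b / (1 + b) + 1 / (1 + b) = 1 from by field_simp; ring, one_mul]
      linarith [hs2]
  · -- lower bound
    rintro v ⟨m, ⟨hm0, hm1⟩, rfl⟩
    split_ifs with h1 h2
    · have hg := gibbsA a m ha hm0 hm1
      have hle := le_max_left ((r - m) * Real.log a) ((m - r) * Real.log b)
      nlinarith [hg, hle]
    · have hra : a / (1 + a) < r := lt_of_not_ge h1
      have hrpos : 0 < r := lt_of_le_of_lt (by positivity : (0:ℝ) ≤ a / (1 + a)) hra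
      have hrlt1 : r < 1 := lt_of_le_of_lt h2 (by rw [div_lt_one h1b]; linarith)
      have hg := gibbs_s13 r m hrpos hrlt1 hm0 hm1
      rcases le_total m r with hmr | hmr
      · have hle := le_max_right ((r - m) * Real.log a) ((m - r) * Real.log b)
        have hlog : Real.log b ≤ Real.log (1 - r) - Real.log r := by
          rw [← Real.log_div (by linarith : (1:ℝ) - r ≠ 0) hrpos.ne']
          apply Real.log_le_log hb
          rw [le_div_iff₀ hrpos]
          have h2' : r * (1 + b) ≤ 1 := (le_div_iff₀ h1b).mp h2
          nlinarith [h2']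
        have key : 0 ≤ (r - m) * (Real.log (1 - r) - Real.log r - Real.log b) :=
          mul_nonneg (by linarith) (by linarith)
        unfold hEnt at hg ⊢
        nlinarith [hg, key, hle]
      · have hle := le_max_left ((r - m) * Real.log a) ((m - r) * Real.log b)
        have hlog : Real.log a ≤ Real.log r - Real.log (1 - r) := by
          rw [← Real.log_div hrpos.ne' (by linarith : (1:ℝ) - r ≠ 0)]
          apply Real.log_le_log ha
          rw [le_div_iff₀ (by linarith : (0:ℝ) < 1 - r)]
          have hra' : a < r * (1 + a) := (div_lt_iff₀ h1a).mp hra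
          nlinarith [hra']
        have key : 0 ≤ (m - r) * (Real.log r - Real.log (1 - r) - Real.log a) :=
          mul_nonneg (by linarith) (by linarith)
        unfold hEnt at hg ⊢
        nlinarith [hg, key, hle]
    · have hg := gibbsB b m hb hm0 hm1
      have hle := le_max_right ((r - m) * Real.log a) ((m - r) * Real.log b)
      nlinarith [hg, hle]
end
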